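/- arXiv:0902.3265 — 2 statements merged into one kernel-verified Lean document; each statement's English description precedes it below -/
import Mathlib

section
/- For every integer n ≥ 1, the 1-subdivision K_n' of the complete graph K_n satisfies π(K_n') ≤ N² + N + N(N−1)/2, where N = ⌈n^{1/3}⌉; in particular π(K_n') ≤ (3/2)n^{2/3} + O(n^{1/3}). -/
open SimpleGraph MeasureTheory Filter

/-! ### Subdivisions -/

/-- A witness that the graph `H` is a subdivision of the graph `G`:  `H` is obtained from `G`
by replacing each edge `ab` of `G` by a path between (the copies of) `a` and `b` whose internal
(division) vertices are new and pairwise distinct. -/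
structure SubdivisionWitness {V : Type*} {W : Type*} (G : SimpleGraph V) (H : SimpleGraph W) where
  emb : V ↪ W
  path : ∀ ⦃a b : V⦄, G.Adj a b → H.Walk (emb a) (emb b)
  path_isPath : ∀ ⦃a b : V⦄ (h : G.Adj a b), (path h).IsPath
  path_symm : ∀ ⦃a b : V⦄ (h : G.Adj a b), path h.symm = (path h).reverse
  internal_new : ∀ ⦃a b : V⦄ (h : G.Adj a b) (x : V),
    emb x ∈ (path h).support → x = a ∨ x = b
  internally_disjoint : ∀ ⦃a b a' b' : V⦄ (h : G.Adj a b) (h' : G.Adj a' b'),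
    s(a, b) ≠ s(a', b') → ∀ w : W, w ∈ (path h).support → w ∈ (path h').support →
      ∃ x : V, emb x = w
  vert_cover : ∀ w : W,
    (∃ x : V, emb x = w) ∨ ∃ (a b : V) (h : G.Adj a b), w ∈ (path h).support
  edge_cover : ∀ e ∈ H.edgeSet, ∃ (a b : V) (h : G.Adj a b), e ∈ (path h).edges

/-- `H` is a subdivision of `G`. -/
def IsSubdivision {V W : Type*} (G : SimpleGraph V) (H : SimpleGraph W) : Prop :=
  Nonempty (SubdivisionWitness G H)

/-- `H` is a `(≤ t)`-subdivision of `G`: a subdivision with at most `t` division vertices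
per edge (i.e. each replacing path has length at most `t + 1`). -/
def IsLESubdivision {V W : Type*} (t : ℕ) (G : SimpleGraph V) (H : SimpleGraph W) : Prop :=
  ∃ S : SubdivisionWitness G H, ∀ ⦃a b : V⦄ (h : G.Adj a b), (S.path h).length ≤ t + 1

/-- `H` is the `t`-subdivision of `G`: exactly `t` division vertices on each edge. -/
def IsExactSubdivision {V W : Type*} (t : ℕ) (G : SimpleGraph V) (H : SimpleGraph W) : Prop :=
  ∃ S : SubdivisionWitness G H, ∀ ⦃a b : V⦄ (h : G.Adj a b), (S.path h).length = t + 1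

/-! ### Shallow topological minors and the top-grad -/

/-- `H` is a shallow topological minor of `G` at depth `d`:  some `(≤ 2d)`-subdivision of `H`
is isomorphic to a subgraph of `G`. -/
def IsShallowTopMinor {W V : Type*} (d : ℕ) (H : SimpleGraph W) (G : SimpleGraph V) : Prop :=
  ∃ (m : ℕ) (S : SimpleGraph (Fin m)),
    IsLESubdivision (2 * d) H S ∧ ∃ f : S →g G, Function.Injective f

/-- The topological greatest reduced average density (top-grad) `∇̃_d(G)` of rank `d`:
the maximum of `‖H‖/|H|` over all shallow topological minors `H` of `G` at depth `d`
with at least one vertex. -/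
noncomputable def topGrad {V : Type*} (d : ℕ) (G : SimpleGraph V) : ℝ :=
  sSup {q : ℝ | ∃ (m : ℕ) (H : SimpleGraph (Fin m)), 0 < m ∧
    IsShallowTopMinor d H G ∧ q = (Nat.card H.edgeSet : ℝ) / m}

/-! ### Shallow minors, the grad, and bounded expansion -/

/-- `H` is a shallow minor of `G` at depth `d`: it is obtained from `G` by contracting
pairwise disjoint connected subgraphs (branch sets) of radius at most `d` and taking
a simple subgraph of the result. -/
def IsShallowMinor {W V : Type*} (d : ℕ) (H : SimpleGraph W) (G : SimpleGraph V) : Prop :=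
  ∃ B : W → Set V,
    (∀ i, (B i).Nonempty) ∧
    (∀ i j, i ≠ j → Disjoint (B i) (B j)) ∧
    (∀ i : W, ∃ c : (B i), ∀ v : (B i), ∃ p : (G.induce (B i)).Walk c v, p.length ≤ d) ∧
    (∀ i j : W, H.Adj i j → ∃ u ∈ B i, ∃ v ∈ B j, G.Adj u v)

/-- The greatest reduced average density (grad) `∇_d(G)` of rank `d`. -/
noncomputable def grad {V : Type*} (d : ℕ) (G : SimpleGraph V) : ℝ :=
  sSup {q : ℝ | ∃ (m : ℕ) (H : SimpleGraph (Fin m)), 0 < m ∧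
    IsShallowMinor d H G ∧ q = (Nat.card H.edgeSet : ℝ) / m}

/-- A class of finite simple graphs, represented by graphs on `Fin n` for all `n`. -/
abbrev GraphClass := Set ((n : ℕ) × SimpleGraph (Fin n))

/-- A class of graphs has bounded expansion if `∇_d` is bounded on the class by a
function of `d`. -/
def BoundedExpansion (C : GraphClass) : Prop :=
  ∃ f : ℕ → ℝ, ∀ G ∈ C, ∀ d : ℕ, grad d G.2 ≤ f d

/-! ### Graph parameters -/

/-- A graph parameter is isomorphism-invariant. -/
def IsoInvariant (α : ((n : ℕ) × SimpleGraph (Fin n)) → ℝ) : Prop :=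
  ∀ G H : (n : ℕ) × SimpleGraph (Fin n), Nonempty (G.2 ≃g H.2) → α G = α H

/-- A graph parameter is strongly topological: `α(G)` and `α(H)` bound each other through a
fixed non-decreasing function, whenever `H` is a `(≤1)`-subdivision of `G`. -/
def StronglyTopological (α : ((n : ℕ) × SimpleGraph (Fin n)) → ℝ) : Prop :=
  ∃ f : ℝ → ℝ, Monotone f ∧ ∀ G H : (n : ℕ) × SimpleGraph (Fin n),
    IsLESubdivision 1 G.2 H.2 → α G ≤ f (α H) ∧ α H ≤ f (α G)

/-- A graph parameter is monotone: it does not increase when passing to a subgraph. -/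
def MonotoneParam (α : ((n : ℕ) × SimpleGraph (Fin n)) → ℝ) : Prop :=
  ∀ G H : (n : ℕ) × SimpleGraph (Fin n),
    (∃ f : H.2 →g G.2, Function.Injective f) → α H ≤ α G

/-- A graph parameter is degree-bound: every nonempty graph has a vertex of degree at most
`f(α(G))` for some fixed function `f`. -/
def DegreeBound (α : ((n : ℕ) × SimpleGraph (Fin n)) → ℝ) : Prop :=
  ∃ f : ℝ → ℝ, ∀ G : (n : ℕ) × SimpleGraph (Fin n), 0 < G.1 →
    ∃ v : Fin G.1, (Nat.card (G.2.neighborSet v) : ℝ) ≤ f (α G)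

/-! ### Queue and stack layouts -/

/-- A `k`-queue layout of `G` with respect to the linear order on `V`: an assignment of the
(potential) edges to `k` queues so that no two edges in a common queue are nested. -/
def IsQueueLayout {V : Type*} [LinearOrder V] (G : SimpleGraph V) (k : ℕ)
    (q : Sym2 V → Fin k) : Prop :=
  ∀ ⦃a b c d : V⦄, G.Adj a b → G.Adj c d → a < b → c < d →
    q s(a, b) = q s(c, d) → ¬(a < c ∧ d < b)

/-- The signed queue function `Q`:  `Q(v,w) = q(vw)` if `v < w` and `Q(v,w) = -q(vw)`
if `w < v` (queues are numbered `1,…,k`). -/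
def signedQueue {V : Type*} [LinearOrder V] {k : ℕ} (q : Sym2 V → Fin k) (v w : V) : ℤ :=
  if v < w then ((q s(v, w) : ℕ) : ℤ) + 1 else -(((q s(v, w) : ℕ) : ℤ) + 1)

/-- `G` admits a `k`-queue layout (for some vertex ordering). -/
def HasQueueLayout {V : Type*} (G : SimpleGraph V) (k : ℕ) : Prop :=
  ∃ (ord : LinearOrder V) (q : Sym2 V → Fin k), @IsQueueLayout V ord G k q

/-- A `k`-stack layout of `G` with respect to the linear order on `V`: an assignment of the
(potential) edges to `k` stacks so that no two edges in a common stack cross. -/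
def IsStackLayout {V : Type*} [LinearOrder V] (G : SimpleGraph V) (k : ℕ)
    (q : Sym2 V → Fin k) : Prop :=
  ∀ ⦃a b c d : V⦄, G.Adj a b → G.Adj c d → a < b → c < d →
    q s(a, b) = q s(c, d) → ¬(a < c ∧ c < b ∧ b < d)

/-- `G` admits a `k`-stack layout (for some vertex ordering). -/
def HasStackLayout {V : Type*} (G : SimpleGraph V) (k : ℕ) : Prop :=
  ∃ (ord : LinearOrder V) (q : Sym2 V → Fin k), @IsStackLayout V ord G k q

/-! ### Contracting the components of a subgraph -/

/-- The equivalence relation on `V(G)` identifying the vertices in a common connected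
component of the subgraph `F`. -/
def contractSetoid {V : Type*} {G : SimpleGraph V} (F : G.Subgraph) : Setoid V where
  r u v := u = v ∨ ∃ (hu : u ∈ F.verts) (hv : v ∈ F.verts),
    F.coe.Reachable ⟨u, hu⟩ ⟨v, hv⟩
  iseqv := by
    refine ⟨fun x => Or.inl rfl, ?_, ?_⟩
    · rintro x y (rfl | ⟨hx, hy, h⟩)
      · exact Or.inl rfl
      · exact Or.inr ⟨hy, hx, h.symm⟩
    · rintro x y z (rfl | ⟨hx, hy, h⟩) hyz
      · exact hyz
      · rcases hyz with (rfl | ⟨hy', hz, h'⟩)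
        · exact Or.inr ⟨hx, hy, h⟩
        · exact Or.inr ⟨hx, hz, h.trans h'⟩

/-- The simple graph obtained from `G` by contracting each connected component of the
subgraph `F` to a single vertex (deleting loops and parallel edges). -/
def contractGraph {V : Type*} {G : SimpleGraph V} (F : G.Subgraph) :
    SimpleGraph (Quotient (contractSetoid F)) where
  Adj A B := A ≠ B ∧ ∃ u v : V, G.Adj u v ∧
    Quotient.mk (contractSetoid F) u = A ∧ Quotient.mk (contractSetoid F) v = B
  symm := by
    constructor
    rintro A B ⟨hne, u, v, h, hu, hv⟩
    exact ⟨hne.symm, v, u, h.symm, hv, hu⟩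
  loopless := by
    constructor
    rintro A ⟨hne, -⟩
    exact hne rfl

/-! ### Non-repetitive and acyclic colourings -/

/-- A colouring `f` of `G` is non-repetitive if there is no path `v₀, …, v_{2s-1}` in `G`
(`s ≥ 1`, vertices pairwise distinct, consecutive vertices adjacent) with
`f(v_i) = f(v_{i+s})` for all `i < s`. -/
def NonRepColoring {V α : Type*} (G : SimpleGraph V) (f : V → α) : Prop :=
  ∀ s : ℕ, 0 < s → ∀ v : ℕ → V,
    (∀ i, i < 2 * s → ∀ j, j < 2 * s → i ≠ j → v i ≠ v j) →
    (∀ i, i + 1 < 2 * s → G.Adj (v i) (v (i + 1))) →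
    ¬(∀ i, i < s → f (v i) = f (v (i + s)))

/-- `π(G)`: the minimum number of colours in a non-repetitive colouring of `G`. -/
noncomputable def piNum {V : Type*} (G : SimpleGraph V) : ℕ :=
  sInf {k : ℕ | ∃ f : V → Fin k, NonRepColoring G f}

/-- A proper colouring of `G` with no bichromatic cycle (every cycle receives at least
three colours). -/
def AcyclicColoring {V α : Type*} (G : SimpleGraph V) (f : V → α) : Prop :=
  (∀ u w : V, G.Adj u w → f u ≠ f w) ∧
  ∀ (u : V) (c : G.Walk u u), c.IsCycle →
    ∃ x ∈ c.support, ∃ y ∈ c.support, ∃ z ∈ c.support, f x ≠ f y ∧ f x ≠ f z ∧ f y ≠ f z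

/-- `χₐ(G)`: the acyclic chromatic number of `G`. -/
noncomputable def chiA {V : Type*} (G : SimpleGraph V) : ℕ :=
  sInf {k : ℕ | ∃ f : V → Fin k, AcyclicColoring G f}

/-! ### The Erdős–Rényi random graph `G(n, p)` -/

/-- The Erdős–Rényi measure: each potential edge (coordinate) is present independently with
probability `p` (truncated to `[0,1]`). -/
noncomputable def erdosRenyi (n : ℕ) (p : ℝ) : Measure (Sym2 (Fin n) → Bool) :=
  Measure.pi fun _ =>
    ((PMF.bernoulli (min (Real.toNNReal p) 1) (min_le_right _ _)).toMeasure)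

/-- The simple graph on `Fin n` determined by an outcome `ω` of the edge indicators. -/
def graphOf {n : ℕ} (ω : Sym2 (Fin n) → Bool) : SimpleGraph (Fin n) where
  Adj u v := u ≠ v ∧ ω s(u, v) = true
  symm := by
    constructor
    rintro u v ⟨hne, h⟩
    exact ⟨hne.symm, by rwa [Sym2.eq_swap]⟩
  loopless := by
    constructor
    rintro u ⟨hne, -⟩
    exact hne rfl


/-! ### Auxiliary infrastructure for Statement 18 -/

section Stmt18Aux

namespace SubdivisionWitness

variable {V W : Type*} {G : SimpleGraph V} {H : SimpleGraph W} (S : SubdivisionWitness G H)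

lemma walk_length_two_decomp {u v : W} (p : H.Walk u v) (hp : p.length = 2) :
    ∃ (m : W) (h1 : H.Adj u m) (h2 : H.Adj m v), p = .cons h1 (.cons h2 .nil) := by
  cases p with
  | nil => simp at hp
  | cons h q =>
    cases q with
    | nil => simp at hp
    | cons h' q' =>
      cases q' with
      | nil => exact ⟨_, h, h', rfl⟩
      | cons h'' q'' => simp [SimpleGraph.Walk.length_cons] at hp

/-- The (unique) division vertex on the path replacing the edge `ab`. -/
noncomputable def mid {a b : V} (h : G.Adj a b) : W := (S.path h).getVert 1

variable (hlen : ∀ ⦃a b : V⦄ (h : G.Adj a b), (S.path h).length = 2)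

include hlen

lemma path_eq {a b : V} (h : G.Adj a b) :
    ∃ (h1 : H.Adj (S.emb a) (S.mid h)) (h2 : H.Adj (S.mid h) (S.emb b)),
      S.path h = SimpleGraph.Walk.cons h1 (SimpleGraph.Walk.cons h2 SimpleGraph.Walk.nil) := by
  obtain ⟨m, h1, h2, hm⟩ := walk_length_two_decomp (S.path h) (hlen h)
  have hmid : S.mid h = m := by
    simp only [mid, hm, SimpleGraph.Walk.getVert_cons_succ, SimpleGraph.Walk.getVert_zero]
  rw [hmid]
  exact ⟨h1, h2, hm⟩

lemma support_eq {a b : V} (h : G.Adj a b) :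
    (S.path h).support = [S.emb a, S.mid h, S.emb b] := by
  obtain ⟨h1, h2, hp⟩ := S.path_eq hlen h
  rw [hp]
  simp

lemma edges_eq {a b : V} (h : G.Adj a b) :
    (S.path h).edges = [s(S.emb a, S.mid h), s(S.mid h, S.emb b)] := by
  obtain ⟨h1, h2, hp⟩ := S.path_eq hlen h
  rw [hp]
  simp

lemma mid_mem_support {a b : V} (h : G.Adj a b) : S.mid h ∈ (S.path h).support := by
  rw [S.support_eq hlen h]; simp

lemma mid_ne_emb {a b : V} (h : G.Adj a b) (x : V) : S.mid h ≠ S.emb x := by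
  intro hx
  have hnd := (S.path_isPath h).support_nodup
  rw [S.support_eq hlen h] at hnd
  simp only [List.nodup_cons, List.mem_cons, List.mem_singleton, List.not_mem_nil,
    not_or, List.nodup_nil, and_true] at hnd
  have hmem : S.emb x ∈ (S.path h).support := by
    rw [S.support_eq hlen h, ← hx]; simp
  rcases S.internal_new h x hmem with rfl | rfl
  · exact hnd.1.1 hx.symm
  · exact hnd.2.1.1 hx

lemma mid_symm {a b : V} (h : G.Adj a b) : S.mid h.symm = S.mid h := by
  have h2 := S.support_eq hlen h.symm
  rw [S.path_symm h, SimpleGraph.Walk.support_reverse, S.support_eq hlen h] at h2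
  simp only [List.reverse_cons, List.reverse_nil, List.nil_append, List.cons_append,
    List.cons.injEq] at h2
  exact h2.2.1.symm

lemma mid_inj {a b a' b' : V} (h : G.Adj a b) (h' : G.Adj a' b')
    (hm : S.mid h = S.mid h') : s(a, b) = s(a', b') := by
  by_contra hne
  obtain ⟨x, hx⟩ := S.internally_disjoint h h' hne (S.mid h)
    (S.mid_mem_support hlen h) (hm ▸ S.mid_mem_support hlen h')
  exact S.mid_ne_emb hlen h x hx.symm

lemma adj_struct {u w : W} (hadj : H.Adj u w) :
    ∃ (a b : V) (h : G.Adj a b),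
      (u = S.emb a ∧ w = S.mid h) ∨ (u = S.mid h ∧ w = S.emb a) := by
  obtain ⟨a, b, h, he⟩ := S.edge_cover s(u, w) hadj
  rw [S.edges_eq hlen h] at he
  simp only [List.mem_cons, List.not_mem_nil, or_false] at he
  rcases he with he | he
  · rw [Sym2.eq_iff] at he
    rcases he with ⟨h1, h2⟩ | ⟨h1, h2⟩
    · exact ⟨a, b, h, Or.inl ⟨h1, h2⟩⟩
    · exact ⟨a, b, h, Or.inr ⟨h1, h2⟩⟩
  · rw [Sym2.eq_iff] at he
    rcases he with ⟨h1, h2⟩ | ⟨h1, h2⟩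
    · exact ⟨b, a, h.symm, Or.inr ⟨by rw [h1, S.mid_symm hlen h], h2⟩⟩
    · exact ⟨b, a, h.symm, Or.inl ⟨h1, by rw [h2, S.mid_symm hlen h]⟩⟩

lemma mid_adj {a b p : V} (h : G.Adj a b) (hadj : H.Adj (S.emb p) (S.mid h)) :
    p = a ∨ p = b := by
  obtain ⟨a', b', h', hc⟩ := S.adj_struct hlen hadj
  rcases hc with ⟨h1, h2⟩ | ⟨h1, h2⟩
  · have hs : s(a, b) = s(a', b') := S.mid_inj hlen h h' h2
    have hp : p = a' := S.emb.injective h1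
    rw [Sym2.eq_iff] at hs
    rcases hs with ⟨rfl, rfl⟩ | ⟨rfl, rfl⟩
    · exact Or.inl hp
    · exact Or.inr hp
  · exact absurd h1.symm (S.mid_ne_emb hlen h' p)

lemma vertex_struct (w : W) :
    (∃ x, S.emb x = w) ∨ ∃ (a b : V) (h : G.Adj a b), w = S.mid h := by
  rcases S.vert_cover w with hw | ⟨a, b, h, hm⟩
  · exact Or.inl hw
  · rw [S.support_eq hlen h] at hm
    simp only [List.mem_cons, List.mem_singleton, List.not_mem_nil, or_false] at hm
    rcases hm with rfl | rfl | rfl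
    · exact Or.inl ⟨a, rfl⟩
    · exact Or.inr ⟨a, b, h, rfl⟩
    · exact Or.inl ⟨b, rfl⟩

end SubdivisionWitness

section Stmt18Color

lemma completeGraph_adj' {α : Type*} {a b : α} : (completeGraph α).Adj a b ↔ a ≠ b := Iff.rfl

variable {n N : ℕ} (hn : n ≤ N ^ 3) (hN : 0 < N)

/-- Encoding of a vertex as a pair of colour coordinates. -/
def enc (v : Fin n) : Fin (N * N) × Fin N :=
  finProdFinEquiv.symm (Fin.castLE (le_of_le_of_eq hn (by ring)) v)

/-- First colour coordinate. -/
def kap (v : Fin n) : Fin (N * N) := (enc hn v).1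

/-- Second colour coordinate. -/
def cc (v : Fin n) : Fin N := (enc hn v).2

lemma kc_inj {v w : Fin n} (h1 : kap hn v = kap hn w) (h2 : cc hn v = cc hn w) :
    v = w := by
  have h : enc hn v = enc hn w := Prod.ext h1 h2
  exact Fin.castLE_injective _ (finProdFinEquiv.symm.injective h)

/-- Colours of division vertices. -/
def gcol (a b : Fin n) : Fin N ⊕ {p : Finset (Fin N) // p.card = 2} :=
  if _hk : kap hn a = kap hn b then
    if hc : cc hn a = cc hn b then Sum.inl ⟨0, hN⟩
    else Sum.inr ⟨{cc hn a, cc hn b}, Finset.card_pair hc⟩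
  else Sum.inl (if kap hn a < kap hn b then cc hn a else cc hn b)

lemma gcol_symm (a b : Fin n) : gcol hn hN a b = gcol hn hN b a := by
  unfold gcol
  rcases eq_or_ne (kap hn a) (kap hn b) with h1 | h1
  · rw [dif_pos h1, dif_pos h1.symm]
    rcases eq_or_ne (cc hn a) (cc hn b) with h2 | h2
    · rw [dif_pos h2, dif_pos h2.symm]
    · rw [dif_neg h2, dif_neg (Ne.symm h2)]
      exact congrArg Sum.inr (Subtype.ext (Finset.pair_comm _ _))
  · rw [dif_neg h1, dif_neg (Ne.symm h1)]
    congr 1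
    rcases lt_or_gt_of_ne h1 with h2 | h2
    · rw [if_pos h2, if_neg (not_lt.mpr h2.le)]
    · rw [if_neg (not_lt.mpr h2.le), if_pos h2]

lemma gcol_sym2 {a b a' b' : Fin n} (h : s(a, b) = s(a', b')) :
    gcol hn hN a b = gcol hn hN a' b' := by
  rw [Sym2.eq_iff] at h
  rcases h with ⟨rfl, rfl⟩ | ⟨rfl, rfl⟩
  · rfl
  · exact gcol_symm hn hN _ _

lemma gcol_contra {A B A' B' : Fin n} (hA : kap hn A = kap hn A')
    (hB : kap hn B = kap hn B') (hAB : A ≠ B) (hAA : A ≠ A') (hAB' : A ≠ B')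
    (hBB : B ≠ B') (hg : gcol hn hN A B = gcol hn hN A' B') : False := by
  unfold gcol at hg
  rcases eq_or_ne (kap hn A) (kap hn B) with h1 | h1
  · have h1' : kap hn A' = kap hn B' := by rw [← hA, ← hB]; exact h1
    have hcAB : cc hn A ≠ cc hn B := fun hc => hAB (kc_inj hn h1 hc)
    rw [dif_pos h1, dif_pos h1', dif_neg hcAB] at hg
    rcases eq_or_ne (cc hn A') (cc hn B') with h2 | h2
    · rw [dif_pos h2] at hg
      exact absurd hg (by simp)
    · rw [dif_neg h2] at hg
      simp only [Sum.inr.injEq, Subtype.mk.injEq] at hg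
      have hmem : cc hn A ∈ ({cc hn A', cc hn B'} : Finset (Fin N)) := by
        rw [← hg]; simp
      rcases Finset.mem_insert.mp hmem with h3 | h3
      · exact hAA (kc_inj hn hA h3)
      · have h3' : cc hn A = cc hn B' := Finset.mem_singleton.mp h3
        exact hAB' (kc_inj hn (h1.trans hB) h3')
  · have h1' : kap hn A' ≠ kap hn B' := by rw [← hA, ← hB]; exact h1
    rw [dif_neg h1, dif_neg h1'] at hg
    simp only [Sum.inl.injEq] at hg
    rcases lt_or_gt_of_ne h1 with h2 | h2
    · have h2' : kap hn A' < kap hn B' := by rw [← hA, ← hB]; exact h2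
      rw [if_pos h2, if_pos h2'] at hg
      exact hAA (kc_inj hn hA hg)
    · have h2' : ¬ kap hn A' < kap hn B' := by rw [← hA, ← hB]; exact not_lt.mpr h2.le
      rw [if_neg (not_lt.mpr h2.le), if_neg h2'] at hg
      exact hBB (kc_inj hn hB hg)

lemma gcol_eq_one {A B y : Fin n} (hK : kap hn A = kap hn B) (hAB : A ≠ B)
    (hyB : y ≠ B) (hg : gcol hn hN A B = gcol hn hN B y) : y = A := by
  have hc : cc hn A ≠ cc hn B := fun h => hAB (kc_inj hn hK h)
  unfold gcol at hg
  rw [dif_pos hK, dif_neg hc] at hg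
  by_cases h1 : kap hn B = kap hn y
  · rw [dif_pos h1] at hg
    by_cases h2 : cc hn B = cc hn y
    · rw [dif_pos h2] at hg
      exact absurd hg (by simp)
    · rw [dif_neg h2] at hg
      simp only [Sum.inr.injEq, Subtype.mk.injEq] at hg
      have hmem : cc hn y ∈ ({cc hn A, cc hn B} : Finset (Fin N)) := by
        rw [hg]; simp
      rcases Finset.mem_insert.mp hmem with h3 | h3
      · exact kc_inj hn (by rw [← h1, ← hK]) h3
      · exact absurd (Finset.mem_singleton.mp h3).symm h2
  · rw [dif_neg h1] at hg
    exact absurd hg (by simp)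

variable {W : Type*} {H : SimpleGraph W} (S : SubdivisionWitness (completeGraph (Fin n)) H)
  (hlen : ∀ ⦃a b : Fin n⦄ (h : (completeGraph (Fin n)).Adj a b), (S.path h).length = 2)

open Classical in
/-- The colouring of the subdivision. -/
noncomputable def fcol : W → (Fin (N * N) ⊕ (Fin N ⊕ {p : Finset (Fin N) // p.card = 2})) :=
  fun w =>
    if hx : ∃ x : Fin n, S.emb x = w then Sum.inl (kap hn hx.choose)
    else if hm : ∃ p : Fin n × Fin n, ∃ h : (completeGraph (Fin n)).Adj p.1 p.2, S.mid h = w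
    then Sum.inr (gcol hn hN hm.choose.1 hm.choose.2)
    else Sum.inl ⟨0, Nat.mul_pos hN hN⟩

lemma fcol_emb (x : Fin n) : fcol hn hN S (S.emb x) = Sum.inl (kap hn x) := by
  have hx : ∃ y : Fin n, S.emb y = S.emb x := ⟨x, rfl⟩
  rw [fcol, dif_pos hx]
  have hcx : hx.choose = x := S.emb.injective hx.choose_spec
  rw [hcx]

include hlen in
lemma fcol_mid {a b : Fin n} (h : (completeGraph (Fin n)).Adj a b) :
    fcol hn hN S (S.mid h) = Sum.inr (gcol hn hN a b) := by
  have hx : ¬ ∃ x : Fin n, S.emb x = S.mid h := by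
    rintro ⟨x, hx⟩
    exact S.mid_ne_emb hlen h x hx.symm
  have hm : ∃ p : Fin n × Fin n, ∃ h' : (completeGraph (Fin n)).Adj p.1 p.2,
      S.mid h' = S.mid h := ⟨(a, b), h, rfl⟩
  rw [fcol, dif_neg hx, dif_pos hm]
  obtain ⟨h', hmid⟩ := hm.choose_spec
  exact congrArg Sum.inr (gcol_sym2 hn hN (S.mid_inj hlen h' h hmid))

set_option maxHeartbeats 2000000 in
include hlen in
lemma fcol_nonrep : NonRepColoring H (fcol hn hN S) := by
  intro s hs v hdist hadj hrep
  -- value transfer: a vertex with the same colour as an embedded vertex is embedded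
  have htyp : ∀ w w' : W, fcol hn hN S w = fcol hn hN S w' →
      (∃ x, S.emb x = w) → (∃ x, S.emb x = w') := by
    rintro w w' hf ⟨x, hx⟩
    rcases S.vertex_struct hlen w' with hE | ⟨a, b, h, hm⟩
    · exact hE
    · exfalso
      rw [← hx, hm, fcol_emb, fcol_mid hn hN S hlen h] at hf
      exact absurd hf (by simp)
  -- alternation of embedded and division vertices along any H-path
  have halt : ∀ u : ℕ → W, (∀ i, i + 1 < 2 * s → H.Adj (u i) (u (i + 1))) →
      ∀ i, i + 1 < 2 * s → ((∃ x, S.emb x = u i) ↔ ¬∃ x, S.emb x = u (i + 1)) := by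
    intro u hadju i hi
    obtain ⟨a, b, h, hc⟩ := S.adj_struct hlen (hadju i hi)
    rcases hc with ⟨h1, h2⟩ | ⟨h1, h2⟩
    · constructor
      · rintro - ⟨x, hx⟩
        rw [h2] at hx
        exact S.mid_ne_emb hlen h x hx.symm
      · intro _
        exact ⟨a, h1.symm⟩
    · constructor
      · rintro ⟨x, hx⟩
        rw [h1] at hx
        exact absurd hx.symm (S.mid_ne_emb hlen h x)
      · intro hni
        exact absurd ⟨a, h2.symm⟩ hni
  -- the parity chain
  have hchain : ∀ u : ℕ → W, (∀ i, i + 1 < 2 * s → H.Adj (u i) (u (i + 1))) →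
      ∀ i, i < 2 * s → ((∃ x, S.emb x = u i) ↔ (Even i ↔ ∃ x, S.emb x = u 0)) := by
    intro u hadju i
    induction i with
    | zero => intro _; simp
    | succ k ih =>
      intro hik
      have hk := ih (by omega)
      have hk2 := halt u hadju k (by omega)
      have h3 : (∃ x, S.emb x = u (k + 1)) ↔ ¬∃ x, S.emb x = u k := iff_not_comm.mp hk2
      rw [Nat.even_add_one, h3, hk]
      exact not_iff
  -- s is even
  have hES : Even s := by
    by_contra hodd
    have h1 := hchain v hadj s (by omega)
    have h2 : (∃ x, S.emb x = v 0) ↔ (∃ x, S.emb x = v (0 + s)) :=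
      ⟨htyp _ _ (hrep 0 hs), htyp _ _ (hrep 0 hs).symm⟩
    simp only [Nat.zero_add] at h2
    by_cases hE0 : ∃ x, S.emb x = v 0
    · exact hodd ((h1.mp (h2.mp hE0)).mpr hE0)
    · exact (fun hEs => hE0 (h2.mpr hEs)) (h1.mpr (iff_of_false hodd hE0))
  obtain ⟨t, hst⟩ := hES
  have ht : 0 < t := by omega
  -- the main argument, for a path starting at an embedded vertex
  have key : ∀ u : ℕ → W,
      (∀ i, i < 2 * s → ∀ j, j < 2 * s → i ≠ j → u i ≠ u j) →
      (∀ i, i + 1 < 2 * s → H.Adj (u i) (u (i + 1))) →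
      (∀ i, i < s → fcol hn hN S (u i) = fcol hn hN S (u (i + s))) →
      (∃ x, S.emb x = u 0) → False := by
    intro u hdistu hadju hrepu hu0
    have hEmbIff : ∀ i, i < 2 * s → ((∃ x, S.emb x = u i) ↔ Even i) := by
      intro i hi
      rw [hchain u hadju i hi]
      exact ⟨fun h => h.mpr hu0, fun he => iff_of_true he hu0⟩
    have hXex : ∀ j, 2 * j < 2 * s → ∃ x, S.emb x = u (2 * j) := by
      intro j hj
      exact (hEmbIff _ hj).mpr ⟨j, by ring⟩
    obtain ⟨x0, hx0⟩ := hXex 0 (by omega)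
    have hXex2 : ∀ j : ℕ, ∃ x : Fin n, 2 * j < 2 * s → S.emb x = u (2 * j) := by
      intro j
      by_cases hj : 2 * j < 2 * s
      · obtain ⟨x, hx⟩ := hXex j hj
        exact ⟨x, fun _ => hx⟩
      · exact ⟨x0, fun hc => absurd hc hj⟩
    choose X hX using hXex2
    have hXd : ∀ j j', 2 * j < 2 * s → 2 * j' < 2 * s → j ≠ j' → X j ≠ X j' := by
      intro j j' hj hj' hne heq
      apply hdistu (2 * j) hj (2 * j') hj' (by omega)
      rw [← hX j hj, ← hX j' hj', heq]
    have hkap : ∀ j, j < t → kap hn (X j) = kap hn (X (j + t)) := by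
      intro j hj
      have h1 := hrepu (2 * j) (by omega)
      have e1 : S.emb (X j) = u (2 * j) := hX j (by omega)
      have e2 : S.emb (X (j + t)) = u (2 * j + s) := by
        rw [show 2 * j + s = 2 * (j + t) by omega]
        exact hX (j + t) (by omega)
      rw [← e1, ← e2, fcol_emb, fcol_emb] at h1
      exact Sum.inl.inj h1
    have hMid : ∀ j, 2 * j + 1 < 2 * s →
        ∃ (a b : Fin n) (h : (completeGraph (Fin n)).Adj a b), u (2 * j + 1) = S.mid h := by
      intro j hj
      rcases S.vertex_struct hlen (u (2 * j + 1)) with hE | hM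
      · exfalso
        have hEv := (hEmbIff (2 * j + 1) hj).mp hE
        exact (Nat.even_add_one.mp hEv) (even_two_mul j)
      · exact hM
    have hEdge : ∀ j, 2 * j + 2 < 2 * s →
        ∃ h : (completeGraph (Fin n)).Adj (X j) (X (j + 1)), u (2 * j + 1) = S.mid h := by
      intro j hj
      obtain ⟨a, b, h, hm⟩ := hMid j (by omega)
      have hadj1 : H.Adj (S.emb (X j)) (S.mid h) := by
        rw [hX j (by omega), ← hm]
        exact hadju (2 * j) (by omega)
      have hadj2 : H.Adj (S.emb (X (j + 1))) (S.mid h) := by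
        rw [hX (j + 1) (by omega), ← hm, show 2 * (j + 1) = 2 * j + 1 + 1 by ring]
        exact (hadju (2 * j + 1) (by omega)).symm
      have hne : X j ≠ X (j + 1) := hXd j (j + 1) (by omega) (by omega) (by omega)
      rcases S.mid_adj hlen h hadj1 with rfl | rfl
      · rcases S.mid_adj hlen h hadj2 with h2 | rfl
        · exact absurd h2.symm hne
        · exact ⟨h, hm⟩
      · rcases S.mid_adj hlen h hadj2 with rfl | h2
        · refine ⟨h.symm, ?_⟩
          rw [hm]
          exact (S.mid_symm hlen h).symm
        · exact absurd h2.symm hne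
    have hLast : ∃ (y : Fin n) (h : (completeGraph (Fin n)).Adj (X (2 * t - 1)) y),
        u (2 * s - 1) = S.mid h := by
      obtain ⟨a, b, h, hm⟩ := hMid (2 * t - 1) (by omega)
      have hm' : u (2 * s - 1) = S.mid h := by
        rw [show 2 * s - 1 = 2 * (2 * t - 1) + 1 by omega]
        exact hm
      have hadj1 : H.Adj (S.emb (X (2 * t - 1))) (S.mid h) := by
        rw [hX (2 * t - 1) (by omega), ← hm]
        exact hadju (2 * (2 * t - 1)) (by omega)
      rcases S.mid_adj hlen h hadj1 with rfl | rfl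
      · exact ⟨b, h, hm'⟩
      · refine ⟨a, h.symm, ?_⟩
        rw [hm']
        exact (S.mid_symm hlen h).symm
    rcases Nat.lt_or_ge t 2 with ht2 | ht2
    · -- t = 1
      have ht1 : t = 1 := by omega
      subst ht1
      obtain ⟨h01, hm01⟩ := hEdge 0 (by omega)
      obtain ⟨y, hy, hmy⟩ := hLast
      have hrep1 := hrepu 1 (by omega)
      have e1 : u 1 = S.mid h01 := by simpa using hm01
      have e2 : u (1 + s) = S.mid hy := by
        rw [show 1 + s = 2 * s - 1 by omega]
        exact hmy
      rw [e1, e2, fcol_mid hn hN S hlen h01, fcol_mid hn hN S hlen hy] at hrep1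
      have hg := Sum.inr.inj hrep1
      have hX01 : X 0 ≠ X 1 := hXd 0 1 (by omega) (by omega) (by omega)
      have hkap01 : kap hn (X 0) = kap hn (X 1) := by simpa using hkap 0 (by omega)
      have hg' : gcol hn hN (X 0) (X 1) = gcol hn hN (X 1) y := by
        have e3 : X (2 * 1 - 1) = X 1 := by norm_num
        rw [← e3]
        exact hg
      have hyne : y ≠ X 1 := by
        have : X (2 * 1 - 1) ≠ y := hy
        simpa using this.symm
      have hyX0 : y = X 0 := gcol_eq_one hn hN hkap01 hX01 hyne hg'
      -- then u 3 = u 1, contradiction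
      have hmid_eq : S.mid hy = S.mid h01 := by
        have h1 : S.mid hy.symm = S.mid hy := S.mid_symm hlen hy
        rw [← h1]
        have hy' : (completeGraph (Fin n)).Adj y (X (2 * 1 - 1)) := hy.symm
        have : y = X 0 := hyX0
        subst this
        rfl
      have : u (1 + s) = u 1 := by rw [e1, e2, hmid_eq]
      exact hdistu (1 + s) (by omega) 1 (by omega) (by omega) this
    · -- t ≥ 2
      obtain ⟨h01, hm01⟩ := hEdge 0 (by omega)
      obtain ⟨htt1, hmtt⟩ := hEdge t (by omega)
      have hrep1 := hrepu 1 (by omega)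
      have e1 : u 1 = S.mid h01 := by simpa using hm01
      have e2 : u (1 + s) = S.mid htt1 := by
        rw [show 1 + s = 2 * t + 1 by omega]
        exact hmtt
      rw [e1, e2, fcol_mid hn hN S hlen h01, fcol_mid hn hN S hlen htt1] at hrep1
      have hg := Sum.inr.inj hrep1
      have hkA : kap hn (X 0) = kap hn (X t) := by simpa using hkap 0 (by omega)
      have hkB : kap hn (X 1) = kap hn (X (t + 1)) := by
        have := hkap 1 (by omega)
        rwa [show 1 + t = t + 1 by omega] at this
      exact gcol_contra hn hN hkA hkB
        (hXd 0 1 (by omega) (by omega) (by omega))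
        (hXd 0 t (by omega) (by omega) (by omega))
        (hXd 0 (t + 1) (by omega) (by omega) (by omega))
        (hXd 1 (t + 1) (by omega) (by omega) (by omega)) hg
  -- apply `key` to the path or its reverse
  by_cases h0 : ∃ x, S.emb x = v 0
  · exact key v hdist hadj hrep h0
  · have h2s1 : ∃ x, S.emb x = v (2 * s - 1) := by
      have hc := hchain v hadj (2 * s - 1) (by omega)
      have hodd : ¬ Even (2 * s - 1) := by
        intro hE
        rw [show 2 * s - 1 = 2 * (s - 1) + 1 by omega] at hE
        exact (Nat.even_add_one.mp hE) (even_two_mul _)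
      exact hc.mpr (iff_of_false hodd h0)
    apply key (fun i => v (2 * s - 1 - i)) ?_ ?_ ?_ h2s1
    · intro i hi j hj hne
      exact hdist (2 * s - 1 - i) (by omega) (2 * s - 1 - j) (by omega) (by omega)
    · intro i hi
      have h1 := (hadj (2 * s - 2 - i) (by omega)).symm
      rw [show 2 * s - 2 - i + 1 = 2 * s - 1 - i by omega] at h1
      rw [show 2 * s - 2 - i = 2 * s - 1 - (i + 1) by omega] at h1
      exact h1
    · intro i hi
      have h1 := hrep (s - 1 - i) (by omega)
      rw [show s - 1 - i + s = 2 * s - 1 - i by omega] at h1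
      rw [show s - 1 - i = 2 * s - 1 - (i + s) by omega] at h1
      exact h1.symm

end Stmt18Color

section Stmt18Main

lemma stmt18_main_bound {n N : ℕ} (hn : n ≤ N ^ 3) (hN : 0 < N) {W : Type*}
    {H : SimpleGraph W} (hsub : IsExactSubdivision 1 (completeGraph (Fin n)) H) :
    piNum H ≤ N ^ 2 + N + N * (N - 1) / 2 := by
  obtain ⟨S, hlen0⟩ := hsub
  have hlen : ∀ ⦃a b : Fin n⦄ (h : (completeGraph (Fin n)).Adj a b),
      (S.path h).length = 2 := by
    intro a b h
    simpa using hlen0 h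
  have hnonrep := fcol_nonrep hn hN S hlen
  have hcard : Fintype.card (Fin (N * N) ⊕ (Fin N ⊕ {p : Finset (Fin N) // p.card = 2}))
      = N ^ 2 + N + N * (N - 1) / 2 := by
    rw [Fintype.card_sum, Fintype.card_sum, Fintype.card_fin, Fintype.card_fin,
      Fintype.card_finset_len, Fintype.card_fin, Nat.choose_two_right, pow_two]
    omega
  set C := Fin (N * N) ⊕ (Fin N ⊕ {p : Finset (Fin N) // p.card = 2}) with hC
  let e := Fintype.equivFin C
  apply Nat.sInf_le
  refine ⟨fun w => finCongr hcard (e (fcol hn hN S w)), ?_⟩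
  intro s hs v hd ha hcontra
  exact hnonrep s hs v hd ha
    (fun i hi => e.injective ((finCongr hcard).injective (hcontra i hi)))

end Stmt18Main

end Stmt18Aux

/-- For every `n ≥ 1`, the `1`-subdivision `K_n'` of the complete graph
`K_n` satisfies `π(K_n') ≤ N² + N + N(N−1)/2` where `N = ⌈n^{1/3}⌉`; in particular
`π(K_n') ≤ (3/2)·n^{2/3} + O(n^{1/3})`. -/
theorem stmt_18 :
    (∀ (n : ℕ), 1 ≤ n → ∀ (W : Type) [Fintype W] (H : SimpleGraph W),
      IsExactSubdivision 1 (completeGraph (Fin n)) H →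
      piNum H ≤ (⌈(n : ℝ) ^ ((1 : ℝ) / 3)⌉₊) ^ 2 + ⌈(n : ℝ) ^ ((1 : ℝ) / 3)⌉₊ +
        ⌈(n : ℝ) ^ ((1 : ℝ) / 3)⌉₊ * (⌈(n : ℝ) ^ ((1 : ℝ) / 3)⌉₊ - 1) / 2) ∧
    ∃ C : ℝ, ∀ (n : ℕ), 1 ≤ n → ∀ (W : Type) [Fintype W] (H : SimpleGraph W),
      IsExactSubdivision 1 (completeGraph (Fin n)) H →
      (piNum H : ℝ) ≤ 3 / 2 * (n : ℝ) ^ ((2 : ℝ) / 3) + C * (n : ℝ) ^ ((1 : ℝ) / 3) := by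
  have hmain : ∀ (n : ℕ), 1 ≤ n → ∀ (W : Type) [Fintype W] (H : SimpleGraph W),
      IsExactSubdivision 1 (completeGraph (Fin n)) H →
      piNum H ≤ (⌈(n : ℝ) ^ ((1 : ℝ) / 3)⌉₊) ^ 2 + ⌈(n : ℝ) ^ ((1 : ℝ) / 3)⌉₊ +
        ⌈(n : ℝ) ^ ((1 : ℝ) / 3)⌉₊ * (⌈(n : ℝ) ^ ((1 : ℝ) / 3)⌉₊ - 1) / 2 := by
    intro n hn1 W _ H hsub
    set N := ⌈(n : ℝ) ^ ((1 : ℝ) / 3)⌉₊ with hNdef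
    have hnpos : (0 : ℝ) < (n : ℝ) := by exact_mod_cast hn1
    have hN : 0 < N := Nat.ceil_pos.mpr (Real.rpow_pos_of_pos hnpos _)
    have hn3 : n ≤ N ^ 3 := by
      have h1 : (n : ℝ) ^ ((1 : ℝ) / 3) ≤ (N : ℝ) := Nat.le_ceil _
      have h2 : (0 : ℝ) ≤ (n : ℝ) ^ ((1 : ℝ) / 3) := Real.rpow_nonneg hnpos.le _
      have h3 : (n : ℝ) = ((n : ℝ) ^ ((1 : ℝ) / 3)) ^ (3 : ℕ) := by
        rw [← Real.rpow_natCast ((n : ℝ) ^ ((1 : ℝ) / 3)) 3,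
          ← Real.rpow_mul hnpos.le]
        norm_num
      have h4 : (n : ℝ) ≤ (N : ℝ) ^ (3 : ℕ) := by
        rw [h3]
        exact pow_le_pow_left₀ h2 h1 3
      exact_mod_cast h4
    exact stmt18_main_bound hn3 hN hsub
  refine ⟨hmain, 10, ?_⟩
  intro n hn1 W _ H hsub
  have hb := hmain n hn1 W H hsub
  set a := (n : ℝ) ^ ((1 : ℝ) / 3) with hadef
  set N := ⌈(n : ℝ) ^ ((1 : ℝ) / 3)⌉₊ with hNdef
  have hnpos : (0 : ℝ) < (n : ℝ) := by exact_mod_cast hn1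
  have ha0 : (0 : ℝ) < a := Real.rpow_pos_of_pos hnpos _
  have ha1 : (1 : ℝ) ≤ a := Real.one_le_rpow (by exact_mod_cast hn1) (by norm_num)
  have haN : (N : ℝ) ≤ a + 1 := (Nat.ceil_lt_add_one ha0.le).le
  have hN0 : (0 : ℝ) ≤ (N : ℝ) := Nat.cast_nonneg N
  have ha2 : (n : ℝ) ^ ((2 : ℝ) / 3) = a ^ (2 : ℕ) := by
    rw [hadef, ← Real.rpow_natCast ((n : ℝ) ^ ((1 : ℝ) / 3)) 2,
      ← Real.rpow_mul hnpos.le]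
    norm_num
  have hb1 : (piNum H : ℝ) ≤ ((N ^ 2 + N + N * (N - 1) / 2 : ℕ) : ℝ) :=
    Nat.cast_le.mpr hb
  have hb2 : ((N ^ 2 + N + N * (N - 1) / 2 : ℕ) : ℝ) ≤ (N : ℝ) ^ 2 + N + (N : ℝ) * N / 2 := by
    push_cast
    have h5 : ((N * (N - 1) / 2 : ℕ) : ℝ) ≤ ((N * (N - 1) : ℕ) : ℝ) / 2 :=
      Nat.cast_div_le
    have h6 : ((N * (N - 1) : ℕ) : ℝ) ≤ (N : ℝ) * N := by
      have : ((N - 1 : ℕ) : ℝ) ≤ (N : ℝ) := by exact_mod_cast Nat.sub_le N 1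
      calc ((N * (N - 1) : ℕ) : ℝ) = (N : ℝ) * ((N - 1 : ℕ) : ℝ) := by push_cast; ring
        _ ≤ (N : ℝ) * N := by nlinarith
    nlinarith
  have hNsq : (N : ℝ) ^ 2 ≤ (a + 1) ^ 2 := pow_le_pow_left₀ hN0 haN 2
  rw [ha2]
  calc (piNum H : ℝ) ≤ (N : ℝ) ^ 2 + N + (N : ℝ) * N / 2 := le_trans hb1 hb2
    _ ≤ 3 / 2 * a ^ (2 : ℕ) + 10 * a := by nlinarith [sq_nonneg (a + 1 - N)]
end

section
/- For all integers A ≥ 1, B ≥ 2, d ≥ 2 and every integer n ≥ 1 with n ≤ A·B^d, the d-subdivision K_{n,d} of the complete graph K_n satisfies π(K_{n,d}) ≤ A + 8B. -/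
open SimpleGraph MeasureTheory Filter

namespace Stmt19Aux

def tm (n : ℕ) : Bool :=
  if h : n = 0 then false else xor (tm (n / 2)) (n % 2 = 1)
  decreasing_by exact Nat.div_lt_self (Nat.pos_of_ne_zero h) one_lt_two

lemma tm_zero : tm 0 = false := by rw [tm]; simp

lemma tm_even (k : ℕ) : tm (2 * k) = tm k := by
  rcases Nat.eq_zero_or_pos k with rfl | hk
  · simp
  · rw [tm]
    have h2 : 2 * k ≠ 0 := by omega
    simp only [h2, dif_neg, ne_eq, not_false_iff]
    have : 2 * k / 2 = k := by omega
    have hm : 2 * k % 2 = 0 := by omega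
    rw [this, hm]
    simp

lemma tm_odd (k : ℕ) : tm (2 * k + 1) = !tm k := by
  rw [tm]
  have h2 : 2 * k + 1 ≠ 0 := by omega
  simp only [h2, dif_neg, ne_eq, not_false_iff]
  have : (2 * k + 1) / 2 = k := by omega
  have hm : (2 * k + 1) % 2 = 1 := by omega
  rw [this, hm]
  simp [Bool.xor_true]

/-- no three equal consecutive letters -/
lemma no_aaa (m : ℕ) : ¬ (tm m = tm (m + 1) ∧ tm (m + 1) = tm (m + 2)) := by
  rintro ⟨h1, h2⟩
  rcases Nat.even_or_odd m with ⟨k, hk⟩ | ⟨k, hk⟩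
  · subst hk
    have e1 : tm (k + k) = tm k := by rw [← two_mul, tm_even]
    have e2 : tm (k + k + 1) = !tm k := by rw [← two_mul, tm_odd]
    rw [e1, e2] at h1
    exact Bool.eq_not_self (tm k) |>.elim (by rw [h1] at *; simp at h1) 
  · subst hk
    have e1 : tm (2 * k + 1 + 1) = tm (k + 1) := by
      have : 2 * k + 1 + 1 = 2 * (k + 1) := by ring
      rw [this, tm_even]
    have e2 : tm (2 * k + 1 + 2) = !tm (k + 1) := by
      have : 2 * k + 1 + 2 = 2 * (k + 1) + 1 := by ring
      rw [this, tm_odd]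
    rw [e1, e2] at h2
    simp at h2

end Stmt19Aux

namespace Stmt19Aux

lemma no_overlap : ∀ (s : ℕ), 1 ≤ s → ∀ p, ¬ (∀ i ≤ s, tm (p + i) = tm (p + s + i)) := by
  intro s
  induction s using Nat.strong_induction_on with
  | _ s IH =>
  intro hs p h
  rcases Nat.even_or_odd s with ⟨r, hr⟩ | ⟨r, hr⟩
  · -- s = r + r
    have hr1 : 1 ≤ r := by omega
    rcases Nat.even_or_odd p with ⟨m, hm⟩ | ⟨m, hm⟩
    · refine IH r (by omega) hr1 m ?_
      intro j hj
      have := h (2 * j) (by omega)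
      have e1 : p + 2 * j = 2 * (m + j) := by omega
      have e2 : p + s + 2 * j = 2 * (m + r + j) := by omega
      rw [e1, e2, tm_even, tm_even] at this
      exact this
    · refine IH r (by omega) hr1 m ?_
      intro j hj
      have := h (2 * j) (by omega)
      have e1 : p + 2 * j = 2 * (m + j) + 1 := by omega
      have e2 : p + s + 2 * j = 2 * (m + r + j) + 1 := by omega
      rw [e1, e2, tm_odd, tm_odd] at this
      simpa using this
  · -- s = 2r + 1
    rcases Nat.eq_zero_or_pos r with rfl | hr1
    · -- s = 1
      have hs1 : s = 1 := by omega
      subst hs1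
      have h0 := h 0 (by omega)
      have h1 := h 1 (by omega)
      refine no_aaa p ⟨?_, ?_⟩
      · simpa using h0
      · have : p + 1 + 1 = p + 2 := by omega
        rw [this] at h1
        simpa using h1
    · -- facts
      rcases Nat.even_or_odd p with ⟨m, hm⟩ | ⟨m, hm⟩
      · -- p = 2m : for k in [m, m+r]: tm(k+r) = !tm k  and  tm(k+r+1) = !tm k
        have F1 : ∀ k, m ≤ k → k ≤ m + r → tm (k + r) = !tm k := by
          intro k h1 h2
          have := h (2 * (k - m)) (by omega)
          have e1 : p + 2 * (k - m) = 2 * k := by omega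
          have e2 : p + s + 2 * (k - m) = 2 * (k + r) + 1 := by omega
          rw [e1, e2, tm_even, tm_odd] at this
          rw [this]
          simp
        have F2 : ∀ k, m ≤ k → k ≤ m + r → tm (k + r + 1) = !tm k := by
          intro k h1 h2
          have := h (2 * (k - m) + 1) (by omega)
          have e1 : p + (2 * (k - m) + 1) = 2 * k + 1 := by omega
          have e2 : p + s + (2 * (k - m) + 1) = 2 * (k + r + 1) := by omega
          rw [e1, e2, tm_odd, tm_even] at this
          rw [← this]
        have G : ∀ k, m ≤ k → k ≤ m + r → tm (k + r) = tm (k + r + 1) := by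
          intro k h1 h2
          rw [F1 k h1 h2, F2 k h1 h2]
        refine no_aaa (m + r) ⟨?_, ?_⟩
        · have := G m le_rfl (by omega)
          simpa using this
        · have := G (m + 1) (by omega) (by omega)
          have e1 : m + 1 + r = m + r + 1 := by omega
          rw [e1] at this
          simpa [show m + r + 1 + 1 = m + r + 2 by omega] using this
      · -- p = 2m+1
        have F1 : ∀ k, m + 1 ≤ k → k ≤ m + r + 1 → tm k = !tm (k + r) := by
          intro k h1 h2
          have := h (2 * (k - m) - 1) (by omega)
          have e1 : p + (2 * (k - m) - 1) = 2 * k := by omega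
          have e2 : p + s + (2 * (k - m) - 1) = 2 * (k + r) + 1 := by omega
          rw [e1, e2, tm_even, tm_odd] at this
          exact this
        have F2 : ∀ k, m ≤ k → k ≤ m + r → tm (k + r + 1) = !tm k := by
          intro k h1 h2
          have := h (2 * (k - m)) (by omega)
          have e1 : p + 2 * (k - m) = 2 * k + 1 := by omega
          have e2 : p + s + 2 * (k - m) = 2 * (k + r + 1) := by omega
          rw [e1, e2, tm_odd, tm_even] at this
          rw [← this]
        rcases Nat.lt_or_ge r 2 with hr2 | hr2
        · -- r = 1
          have hre : r = 1 := by omega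
          subst hre
          have a1 : tm (m + 1) = !tm (m + 2) := by
            have := F1 (m + 1) le_rfl (by omega); simpa using this
          have a2 : tm (m + 2) = !tm (m + 3) := by
            have := F1 (m + 2) (by omega) (by omega)
            simpa [show m + 2 + 1 = m + 3 by omega] using this
          have b1 : tm (m + 1 + 1 + 1) = !tm (m + 1) := F2 (m + 1) (by omega) (by omega)
          have b1' : tm (m + 3) = !tm (m + 1) := by
            simpa [show m + 1 + 1 + 1 = m + 3 by omega] using b1
          rw [a2, b1'] at a1
          simp at a1
        · -- r ≥ 2
          have G : ∀ k, m + 1 ≤ k → k ≤ m + r → tm (k + r) = tm (k + r + 1) := by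
            intro k h1 h2
            have f1 := F1 k h1 (by omega)
            have f2 := F2 k (by omega) h2
            rw [f2, f1]
            simp
          refine no_aaa (m + 1 + r) ⟨?_, ?_⟩
          · have := G (m + 1) le_rfl (by omega)
            simpa using this
          · have := G (m + 2) (by omega) (by omega)
            have e1 : m + 2 + r = m + 1 + r + 1 := by omega
            rw [e1] at this
            simpa [show m + 1 + r + 1 + 1 = m + 1 + r + 2 by omega] using this

/-- the 4-letter square-free word -/
def cw (k : ℕ) : ℕ := (if tm k then 2 else 0) + (if tm (k + 1) then 1 else 0)

lemma cw_le (k : ℕ) : cw k ≤ 3 := by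
  unfold cw; split <;> split <;> omega

lemma cw_eq_iff {a b : ℕ} (h : cw a = cw b) : tm a = tm b ∧ tm (a + 1) = tm (b + 1) := by
  unfold cw at h
  cases ha : tm a <;> cases hb : tm b <;> cases ha' : tm (a+1) <;> cases hb' : tm (b+1) <;>
    rw [ha, hb, ha', hb'] at h <;> simp_all

lemma no_square (L q : ℕ) (hL : 1 ≤ L) (h : ∀ t < L, cw (q + t) = cw (q + L + t)) : False := by
  refine no_overlap L hL q ?_
  intro i hi
  rcases Nat.lt_or_ge i L with hlt | hge
  · exact (cw_eq_iff (h i hlt)).1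
  · have his : i = L := by omega
    have key := (cw_eq_iff (h (L - 1) (by omega))).2
    have e1 : q + (L - 1) + 1 = q + L := by omega
    have e2 : q + L + (L - 1) + 1 = q + L + L := by omega
    rw [e1, e2] at key
    rw [his]
    exact key

end Stmt19Aux



namespace Stmt19Aux

variable {V : Type*} {G : SimpleGraph V}

lemma getVert_inj {u v : V} (p : G.Walk u v) (hp : p.IsPath) :
    ∀ i, i ≤ p.length → ∀ j, j ≤ p.length → p.getVert i = p.getVert j → i = j := by
  induction p with
  | nil => intro i hi j hj _; simp at hi hj; omega
  | cons h q ih =>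
    rw [Walk.cons_isPath_iff] at hp
    intro i hi j hj heq
    match i, j with
    | 0, 0 => rfl
    | 0, j + 1 =>
      exfalso
      apply hp.2
      rw [Walk.mem_support_iff_exists_getVert]
      refine ⟨j, by simpa using heq.symm, by simpa [Walk.length_cons] using hj⟩
    | i + 1, 0 =>
      exfalso
      apply hp.2
      rw [Walk.mem_support_iff_exists_getVert]
      refine ⟨i, by simpa using heq, by simpa [Walk.length_cons] using hi⟩
    | i + 1, j + 1 =>
      have := ih hp.1 i (by simpa [Walk.length_cons] using hi) j
        (by simpa [Walk.length_cons] using hj) (by simpa using heq)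
      omega

lemma mem_edges_getVert {u v : V} (p : G.Walk u v) {e : Sym2 V} (he : e ∈ p.edges) :
    ∃ i, i < p.length ∧ e = s(p.getVert i, p.getVert (i + 1)) := by
  induction p with
  | nil => simp at he
  | cons h q ih =>
    rw [Walk.edges_cons, List.mem_cons] at he
    rcases he with rfl | he
    · refine ⟨0, by simp [Walk.length_cons], ?_⟩
      simp
    · obtain ⟨i, hi, hei⟩ := ih he
      refine ⟨i + 1, by simp [Walk.length_cons]; omega, by simpa using hei⟩

lemma getVert_mem_support' {u v : V} (p : G.Walk u v) {k : ℕ} (hk : k ≤ p.length) :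
    p.getVert k ∈ p.support := by
  rw [Walk.mem_support_iff_exists_getVert]
  exact ⟨k, rfl, hk⟩

end Stmt19Aux

namespace Stmt19Aux

section Witness

variable {W : Type*} {H : SimpleGraph W} {n d : ℕ}

lemma kadj {a b : Fin n} (hab : a ≠ b) : (completeGraph (Fin n)).Adj a b := hab

variable (S : SubdivisionWitness (completeGraph (Fin n)) H)

/-- the `k`-th vertex on the subdivision path from `a` to `b` -/
noncomputable def vx (a b : Fin n) (k : ℕ) : W :=
  if hab : a ≠ b then (S.path (kadj hab)).getVert k else S.emb a

variable (hlen : ∀ ⦃a b : Fin n⦄ (h : (completeGraph (Fin n)).Adj a b),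
  (S.path h).length = d + 1)

lemma vx_def {a b : Fin n} (hab : a ≠ b) (k : ℕ) :
    vx S a b k = (S.path (kadj hab)).getVert k := dif_pos hab

lemma vx_zero {a b : Fin n} (hab : a ≠ b) : vx S a b 0 = S.emb a := by
  rw [vx_def S hab]; simp

include hlen

lemma vx_last {a b : Fin n} (hab : a ≠ b) : vx S a b (d + 1) = S.emb b := by
  rw [vx_def S hab]
  have := hlen (kadj hab)
  rw [← this]
  simp

lemma vx_adj {a b : Fin n} (hab : a ≠ b) {k : ℕ} (hk : k ≤ d) :
    H.Adj (vx S a b k) (vx S a b (k + 1)) := by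
  rw [vx_def S hab, vx_def S hab]
  exact Walk.adj_getVert_succ _ (by rw [hlen (kadj hab)]; omega)

lemma vx_inj {a b : Fin n} (hab : a ≠ b) {k k' : ℕ} (hk : k ≤ d + 1) (hk' : k' ≤ d + 1)
    (h : vx S a b k = vx S a b k') : k = k' := by
  rw [vx_def S hab, vx_def S hab] at h
  exact getVert_inj _ (S.path_isPath (kadj hab)) k (by rw [hlen (kadj hab)]; omega) k'
    (by rw [hlen (kadj hab)]; omega) h

lemma vx_flip {a b : Fin n} (hab : a ≠ b) {k : ℕ} (hk : k ≤ d + 1) :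
    vx S a b k = vx S b a (d + 1 - k) := by
  rw [vx_def S hab, vx_def S hab.symm]
  have hsy : S.path (kadj hab.symm) = (S.path (kadj hab)).reverse := S.path_symm (kadj hab)
  rw [hsy, Walk.getVert_reverse]
  congr 1
  rw [hlen (kadj hab)]
  omega

lemma vx_mem_support {a b : Fin n} (hab : a ≠ b) {k : ℕ} (hk : k ≤ d + 1) :
    vx S a b k ∈ (S.path (kadj hab)).support := by
  rw [vx_def S hab]
  exact getVert_mem_support' _ (by rw [hlen (kadj hab)]; omega)

lemma vx_ne_emb {a b : Fin n} (hab : a ≠ b) {k : ℕ} (hk1 : 1 ≤ k) (hk2 : k ≤ d) (x : Fin n) :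
    vx S a b k ≠ S.emb x := by
  intro he
  have hmem : S.emb x ∈ (S.path (kadj hab)).support := by
    rw [← he]; exact vx_mem_support S hlen hab (by omega)
  rcases S.internal_new (kadj hab) x hmem with h1 | h1
  · rw [h1] at he
    have : vx S a b k = vx S a b 0 := by rw [vx_zero S hab]; exact he
    have := vx_inj S hlen hab (by omega) (by omega) this
    omega
  · rw [h1] at he
    have : vx S a b k = vx S a b (d + 1) := by rw [vx_last S hlen hab]; exact he
    have := vx_inj S hlen hab (by omega) (by omega) this
    omega

lemma emb_eq_vx {a b x : Fin n} (hab : a ≠ b) {k : ℕ} (hk : k ≤ d + 1)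
    (h : vx S a b k = S.emb x) : (k = 0 ∧ x = a) ∨ (k = d + 1 ∧ x = b) := by
  rcases Nat.eq_zero_or_pos k with rfl | hk1
  · left
    refine ⟨rfl, ?_⟩
    rw [vx_zero S hab] at h
    exact (S.emb.injective h).symm
  rcases Nat.lt_or_ge k (d + 1) with hk2 | hk2
  · exact absurd h (vx_ne_emb S hlen hab (by omega) (by omega) x)
  · right
    have hkd : k = d + 1 := by omega
    subst hkd
    rw [vx_last S hlen hab] at h
    exact ⟨rfl, (S.emb.injective h).symm⟩

lemma vx_edge_unique {a b a' b' : Fin n} (hab : a ≠ b) (hab' : a' ≠ b') {k k' : ℕ}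
    (hk1 : 1 ≤ k) (hk2 : k ≤ d) (hk1' : 1 ≤ k') (hk2' : k' ≤ d)
    (h : vx S a b k = vx S a' b' k') :
    (a = a' ∧ b = b' ∧ k = k') ∨ (a = b' ∧ b = a' ∧ k + k' = d + 1) := by
  by_cases hss : s(a, b) = s(a', b')
  · rw [Sym2.eq_iff] at hss
    rcases hss with ⟨rfl, rfl⟩ | ⟨rfl, rfl⟩
    · left
      exact ⟨rfl, rfl, vx_inj S hlen hab (by omega) (by omega) h⟩
    · right
      refine ⟨rfl, rfl, ?_⟩
      rw [vx_flip S hlen hab' (show k' ≤ d + 1 by omega)] at h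
      have := vx_inj S hlen hab (by omega) (by omega) h
      omega
  · exfalso
    obtain ⟨x, hx⟩ := S.internally_disjoint (kadj hab) (kadj hab') hss (vx S a b k)
      (vx_mem_support S hlen hab (by omega))
      (by rw [h]; exact vx_mem_support S hlen hab' (by omega))
    exact vx_ne_emb S hlen hab (by omega) (by omega) x hx.symm

lemma adj_class {w w' : W} (hadj : H.Adj w w') :
    ∃ (a b : Fin n) (_ : a ≠ b) (k : ℕ), k ≤ d ∧ w = vx S a b k ∧ w' = vx S a b (k + 1) := by
  obtain ⟨a, b, h, hmem⟩ := S.edge_cover s(w, w') (H.mem_edgeSet.mpr hadj)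
  have hab : a ≠ b := h.ne
  obtain ⟨i, hi, hei⟩ := mem_edges_getVert _ hmem
  have hilen : i < d + 1 := by rw [← hlen h]; exact hi
  have hpe : S.path h = S.path (kadj hab) := rfl
  rw [hpe] at hei
  rw [Sym2.eq_iff] at hei
  rcases hei with ⟨h1, h2⟩ | ⟨h1, h2⟩
  · exact ⟨a, b, hab, i, by omega, by rw [vx_def S hab]; exact h1,
      by rw [vx_def S hab]; exact h2⟩
  · refine ⟨b, a, hab.symm, d - i, by omega, ?_, ?_⟩
    · rw [vx_flip S hlen hab.symm (show d - i ≤ d + 1 by omega)]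
      have e : d + 1 - (d - i) = i + 1 := by omega
      rw [e, vx_def S hab]
      exact h1
    · rw [vx_flip S hlen hab.symm (show d - i + 1 ≤ d + 1 by omega)]
      have e : d + 1 - (d - i + 1) = i := by omega
      rw [e, vx_def S hab]
      exact h2

lemma branch_or_internal (w : W) :
    (∃ x, w = S.emb x) ∨ ∃ (a b : Fin n) (_ : a ≠ b) (k : ℕ),
      1 ≤ k ∧ k ≤ d ∧ a < b ∧ w = vx S a b k := by
  rcases S.vert_cover w with ⟨x, hx⟩ | ⟨a, b, h, hmem⟩
  · exact Or.inl ⟨x, hx.symm⟩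
  · have hab : a ≠ b := h.ne
    rw [show S.path h = S.path (kadj hab) from rfl,
      Walk.mem_support_iff_exists_getVert] at hmem
    obtain ⟨k, hk, hklen⟩ := hmem
    rw [hlen (kadj hab)] at hklen
    have hw : w = vx S a b k := by rw [vx_def S hab]; exact hk.symm
    rcases Nat.eq_zero_or_pos k with rfl | h1
    · exact Or.inl ⟨a, by rw [hw, vx_zero S hab]⟩
    rcases Nat.lt_or_ge k (d + 1) with h2 | h2
    · right
      rcases lt_or_gt_of_ne hab with hlt | hgt
      · exact ⟨a, b, hab, k, by omega, by omega, hlt, hw⟩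
      · refine ⟨b, a, hab.symm, d + 1 - k, by omega, by omega, hgt, ?_⟩
        rw [hw, vx_flip S hlen hab (show k ≤ d + 1 by omega)]
    · have hkd : k = d + 1 := by omega
      subst hkd
      exact Or.inl ⟨b, by rw [hw, vx_last S hlen hab]⟩

end Witness

section Colour

open scoped Classical

variable {W : Type*} {H : SimpleGraph W} {n d A B : ℕ}
variable (co : Fin n ↪ Fin A × (Fin d → Fin B))

/-- first coordinate of the code -/
def al (x : Fin n) : ℕ := ((co x).1 : ℕ)

/-- digits of the code, 0-indexed -/
def be (x : Fin n) (k : ℕ) : ℕ := if h : k < d then ((co x).2 ⟨k, h⟩ : ℕ) else 0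

lemma al_lt (x : Fin n) : al co x < A := (co x).1.isLt

lemma be_lt (hB : 1 ≤ B) (x : Fin n) (k : ℕ) : be co x k < B := by
  unfold be
  split
  · exact ((co x).2 _).isLt
  · omega

lemma code_eq {x y : Fin n} (h1 : al co x = al co y)
    (h2 : ∀ k < d, be co x k = be co y k) : x = y := by
  apply co.injective
  have e1 : (co x).1 = (co y).1 := Fin.ext h1
  have e2 : (co x).2 = (co y).2 := by
    funext i
    have := h2 i.val i.isLt
    unfold be at this
    rw [dif_pos i.isLt, dif_pos i.isLt] at this
    exact Fin.ext (by simpa using this)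
  exact Prod.ext e1 e2

/-- position (1-indexed) of the highest digit where the codes differ, 0 if none -/
def tdf (x y : Fin n) : ℕ :=
  Nat.findGreatest (fun k => 1 ≤ k ∧ be co x (k - 1) ≠ be co y (k - 1)) d

lemma tdf_symm (x y : Fin n) : tdf co x y = tdf co y x := by
  unfold tdf
  congr 1
  funext k
  refine propext ⟨fun ⟨u, v⟩ => ⟨u, v.symm⟩, fun ⟨u, v⟩ => ⟨u, v.symm⟩⟩

lemma tdf_le (x y : Fin n) : tdf co x y ≤ d := Nat.findGreatest_le d

lemma exists_be_diff {x y : Fin n} (hxy : x ≠ y) (hal : al co x = al co y) :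
    ∃ k < d, be co x k ≠ be co y k := by
  by_contra h
  push_neg at h
  exact hxy (code_eq co hal h)

lemma tdf_spec {x y : Fin n} (h : ∃ k < d, be co x k ≠ be co y k) :
    1 ≤ tdf co x y ∧ be co x (tdf co x y - 1) ≠ be co y (tdf co x y - 1) := by
  obtain ⟨k, hk, hne⟩ := h
  have hP : (fun m => 1 ≤ m ∧ be co x (m - 1) ≠ be co y (m - 1)) (k + 1) :=
    ⟨by omega, by simpa using hne⟩
  unfold tdf
  exact Nat.findGreatest_spec
    (P := fun m => 1 ≤ m ∧ be co x (m - 1) ≠ be co y (m - 1)) (by omega) hP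

lemma tdf_max {x y : Fin n} {k : ℕ} (hk : tdf co x y < k) (hkd : k ≤ d) :
    be co x (k - 1) = be co y (k - 1) := by
  unfold tdf at hk
  have := Nat.findGreatest_is_greatest
    (P := fun m => 1 ≤ m ∧ be co x (m - 1) ≠ be co y (m - 1)) hk hkd
  by_contra h
  exact this ⟨by omega, h⟩

lemma tdf_pos_spec {x y : Fin n} (h : 1 ≤ tdf co x y) :
    be co x (tdf co x y - 1) ≠ be co y (tdf co x y - 1) := by
  have heq : Nat.findGreatest (fun k => 1 ≤ k ∧ be co x (k - 1) ≠ be co y (k - 1)) d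
      = tdf co x y := rfl
  have h2 := (Nat.findGreatest_eq_iff).mp heq
  exact (h2.2.1 (by omega)).2

/-- the phase letter at (canonical) position `k` of the edge `{x, y}` with `x < y` -/
def ph (x y : Fin n) (k : ℕ) : ℕ :=
  if k = 1 then (if tdf co x y = 1 then 7 else 6)
  else if k = tdf co x y then 5
  else cw k

lemma ph_le (x y : Fin n) (k : ℕ) : ph co x y k ≤ 7 := by
  unfold ph
  split
  · split <;> omega
  · split
    · omega
    · have := cw_le k
      omega

lemma ph_one_ge (x y : Fin n) : 6 ≤ ph co x y 1 := by
  unfold ph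
  rw [if_pos rfl]
  split <;> omega

lemma ph_ne_one_le (x y : Fin n) {k : ℕ} (hk : k ≠ 1) : ph co x y k ≤ 5 := by
  unfold ph
  rw [if_neg hk]
  split
  · omega
  · have := cw_le k
    omega

lemma ph_mark_iff (x y : Fin n) {k : ℕ} (hk : k ≠ 1) :
    ph co x y k = 5 ↔ k = tdf co x y := by
  unfold ph
  rw [if_neg hk]
  constructor
  · intro h
    by_contra hne
    rw [if_neg hne] at h
    have := cw_le k
    omega
  · intro h
    rw [if_pos h]

lemma ph_one_eq (x y x' y' : Fin n) (h : ph co x y 1 = ph co x' y' 1) :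
    tdf co x y = 1 ↔ tdf co x' y' = 1 := by
  unfold ph at h
  rw [if_pos rfl, if_pos rfl] at h
  constructor <;> intro h1
  · rw [if_pos h1] at h
    by_contra h2
    rw [if_neg h2] at h
    omega
  · rw [if_pos h1] at h
    by_contra h2
    rw [if_neg h2] at h
    omega

lemma ph_plain (x y : Fin n) {k : ℕ} (h1 : k ≠ 1) (h2 : k ≠ tdf co x y) :
    ph co x y k = cw k := by
  unfold ph
  rw [if_neg h1, if_neg h2]

/-- oriented digit letter: the `k`-th letter along the traversal from `a` to `b` -/
def DG (a b : Fin n) (k : ℕ) : ℕ :=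
  if a < b then be co b (k - 1) else be co a (d + 1 - k - 1)

/-- oriented phase letter -/
def PH (a b : Fin n) (k : ℕ) : ℕ :=
  if a < b then ph co a b k else ph co b a (d + 1 - k)

end Colour

end Stmt19Aux

namespace Stmt19Aux

section ColN

open scoped Classical

variable {W : Type*} {H : SimpleGraph W} {n d A B : ℕ}
variable (S : SubdivisionWitness (completeGraph (Fin n)) H)
variable (co : Fin n ↪ Fin A × (Fin d → Fin B))

/-- the colour (as a natural number) of a vertex of the subdivision -/
noncomputable def colN (w : W) : ℕ :=
  if h : ∃ x, w = S.emb x then al co h.choose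
  else if h2 : ∃ p : Fin n × Fin n × ℕ,
      p.1 < p.2.1 ∧ 1 ≤ p.2.2 ∧ p.2.2 ≤ d ∧ w = vx S p.1 p.2.1 p.2.2 then
    A + 8 * be co h2.choose.2.1 (h2.choose.2.2 - 1)
      + ph co h2.choose.1 h2.choose.2.1 h2.choose.2.2
  else 0

lemma colN_emb (x : Fin n) : colN S co (S.emb x) = al co x := by
  unfold colN
  have h : ∃ y : Fin n, S.emb x = S.emb y := ⟨x, rfl⟩
  rw [dif_pos h]
  congr 1
  exact (S.emb.injective h.choose_spec).symm

variable (hlen : ∀ ⦃a b : Fin n⦄ (h : (completeGraph (Fin n)).Adj a b),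
  (S.path h).length = d + 1)

include hlen

lemma colN_vx {a b : Fin n} {k : ℕ} (hab : a < b) (hk1 : 1 ≤ k) (hk2 : k ≤ d) :
    colN S co (vx S a b k) = A + 8 * be co b (k - 1) + ph co a b k := by
  unfold colN
  have hne : ¬ ∃ x, vx S a b k = S.emb x := by
    rintro ⟨x, hx⟩
    exact vx_ne_emb S hlen hab.ne hk1 hk2 x hx
  rw [dif_neg hne]
  have h2 : ∃ p : Fin n × Fin n × ℕ,
      p.1 < p.2.1 ∧ 1 ≤ p.2.2 ∧ p.2.2 ≤ d ∧ vx S a b k = vx S p.1 p.2.1 p.2.2 :=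
    ⟨(a, b, k), hab, hk1, hk2, rfl⟩
  rw [dif_pos h2]
  obtain ⟨hlt, h1', h2', heq⟩ := h2.choose_spec
  rcases vx_edge_unique S hlen hab.ne hlt.ne hk1 hk2 h1' h2' heq with
    ⟨e1, e2, e3⟩ | ⟨e1, e2, _⟩
  · rw [← e1, ← e2, ← e3]
  · exfalso
    rw [← e1, ← e2] at hlt
    exact absurd hab (asymm hlt)

lemma colN_vxO {a b : Fin n} {k : ℕ} (hab : a ≠ b) (hk1 : 1 ≤ k) (hk2 : k ≤ d) :
    colN S co (vx S a b k) = A + 8 * DG co a b k + PH co a b k := by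
  rcases lt_or_gt_of_ne hab with hlt | hgt
  · rw [colN_vx S co hlen hlt hk1 hk2]
    unfold DG PH
    rw [if_pos hlt, if_pos hlt]
  · rw [vx_flip S hlen hab (show k ≤ d + 1 by omega),
      colN_vx S co hlen hgt (by omega) (by omega)]
    unfold DG PH
    rw [if_neg (asymm hgt), if_neg (asymm hgt)]

omit hlen

lemma DG_lt (hB : 1 ≤ B) (a b : Fin n) (k : ℕ) : DG co a b k < B := by
  unfold DG
  split <;> exact be_lt co hB _ _

lemma PH_le (a b : Fin n) (k : ℕ) : PH co a b k ≤ 7 := by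
  unfold PH
  split <;> exact ph_le co _ _ _

include hlen

lemma colN_lt (hA : 1 ≤ A) (hB : 1 ≤ B) (w : W) : colN S co w < A + 8 * B := by
  rcases branch_or_internal S hlen w with ⟨x, rfl⟩ | ⟨a, b, hab, k, hk1, hk2, _, rfl⟩
  · have := al_lt co x
    rw [colN_emb]
    omega
  · rw [colN_vxO S co hlen hab hk1 hk2]
    have := DG_lt co hB a b k
    have := PH_le co a b k
    omega

lemma colN_lt_iff (w : W) : colN S co w < A ↔ ∃ x, w = S.emb x := by
  constructor
  · intro h
    rcases branch_or_internal S hlen w with hx | ⟨a, b, hab, k, hk1, hk2, _, rfl⟩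
    · exact hx
    · rw [colN_vxO S co hlen hab hk1 hk2] at h
      omega
  · rintro ⟨x, rfl⟩
    rw [colN_emb]
    exact al_lt co x

omit hlen

/-- no square of phases along a canonically oriented window -/
lemma canon_nosq {x y : Fin n} {p s : ℕ} (hp : 1 ≤ p) (hs : 1 ≤ s) (hb : p + 2 * s ≤ d + 1)
    (h : ∀ t < s, ph co x y (p + t) = ph co x y (p + s + t)) : False := by
  rcases Nat.eq_or_lt_of_le hp with hp1 | hp2
  · -- p = 1
    have h0 := h 0 (by omega)
    rw [← hp1] at h0
    have l1 := ph_one_ge co x y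
    have l2 := ph_ne_one_le co x y (show 1 + s ≠ 1 by omega)
    simp only [Nat.add_zero] at h0
    omega
  · by_cases h1 : p ≤ tdf co x y ∧ tdf co x y < p + s
    · have := h (tdf co x y - p) (by omega)
      have e1 : p + (tdf co x y - p) = tdf co x y := by omega
      have e2 : p + s + (tdf co x y - p) = tdf co x y + s := by omega
      rw [e1, e2] at this
      have l1 : ph co x y (tdf co x y) = 5 :=
        (ph_mark_iff co x y (by omega)).mpr rfl
      have l2 : ph co x y (tdf co x y + s) = cw (tdf co x y + s) :=
        ph_plain co x y (by omega) (by omega)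
      have := cw_le (tdf co x y + s)
      omega
    · by_cases h2 : p + s ≤ tdf co x y ∧ tdf co x y < p + 2 * s
      · have := h (tdf co x y - p - s) (by omega)
        have e1 : p + (tdf co x y - p - s) = tdf co x y - s := by omega
        have e2 : p + s + (tdf co x y - p - s) = tdf co x y := by omega
        rw [e1, e2] at this
        have l1 : ph co x y (tdf co x y) = 5 :=
          (ph_mark_iff co x y (by omega)).mpr rfl
        have l2 : ph co x y (tdf co x y - s) = cw (tdf co x y - s) :=
          ph_plain co x y (by omega) (by omega)
        have := cw_le (tdf co x y - s)
        omega
      · push_neg at h1 h2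
        apply no_square s p hs
        intro t ht
        have := h t ht
        rw [ph_plain co x y (by omega) (by omega),
          ph_plain co x y (by omega) (by omega)] at this
        exact this

/-- no square of oriented phases -/
lemma nosq_oriented {a b : Fin n} (hab : a ≠ b) {q s : ℕ} (hq : 1 ≤ q) (hs : 1 ≤ s)
    (hb : q + 2 * s ≤ d + 1) (h : ∀ t < s, PH co a b (q + t) = PH co a b (q + s + t)) :
    False := by
  rcases lt_or_gt_of_ne hab with hlt | hgt
  · refine canon_nosq co (x := a) (y := b) hq hs hb ?_
    intro t ht
    have := h t ht
    unfold PH at this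
    rw [if_pos hlt, if_pos hlt] at this
    exact this
  · refine canon_nosq co (x := b) (y := a) (p := d + 2 - q - 2 * s) (by omega) hs (by omega) ?_
    intro t ht
    have := h (s - 1 - t) (by omega)
    unfold PH at this
    rw [if_neg (asymm hgt), if_neg (asymm hgt)] at this
    have e1 : d + 1 - (q + (s - 1 - t)) = d + 2 - q - 2 * s + s + t := by omega
    have e2 : d + 1 - (q + s + (s - 1 - t)) = d + 2 - q - 2 * s + t := by omega
    rw [e1, e2] at this
    exact this.symm

end ColN

end Stmt19Aux

namespace Stmt19Aux

section Runs

variable {W : Type*} {H : SimpleGraph W} {n d : ℕ}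
variable (S : SubdivisionWitness (completeGraph (Fin n)) H)
variable (hlen : ∀ ⦃a b : Fin n⦄ (h : (completeGraph (Fin n)).Adj a b),
  (S.path h).length = d + 1)
variable (v : ℕ → W) (N : ℕ)
variable (hadj : ∀ t, t + 1 < N → H.Adj (v t) (v (t + 1)))
variable (hdist : ∀ i, i < N → ∀ j, j < N → i ≠ j → v i ≠ v j)

include hlen hadj hdist

/-- a maximal run of internal vertices lies monotonically on a single subdivision path -/
lemma run_lemma (i : ℕ) : ∀ (j : ℕ), i ≤ j → j < N →
    (∀ t, i ≤ t → t ≤ j → ¬ ∃ x, v t = S.emb x) →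
    ∃ (a b : Fin n) (_ : a ≠ b) (q : ℕ), 1 ≤ q ∧ q + (j - i) ≤ d ∧
      ∀ t, i ≤ t → t ≤ j → v t = vx S a b (q + (t - i)) := by
  intro j hij
  induction j, hij using Nat.le_induction with
  | base =>
    intro hN hint
    rcases branch_or_internal S hlen (v i) with hx | ⟨a, b, hab, k, hk1, hk2, _, hv⟩
    · exact absurd hx (hint i le_rfl le_rfl)
    · refine ⟨a, b, hab, k, hk1, by omega, ?_⟩
      intro u hu1 hu2
      have hu : u = i := by omega
      rw [hu, hv]
      congr 1
      omega
  | succ j hij IH =>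
    intro hN hint
    obtain ⟨a, b, hab, q, hq1, hq2, hrun⟩ := IH (by omega)
      (fun t h1 h2 => hint t h1 (by omega))
    obtain ⟨a', b', hab', k, hk, h1, h2⟩ := adj_class S hlen (hadj j (by omega))
    have hk1 : 1 ≤ k := by
      rcases Nat.eq_zero_or_pos k with rfl | h
      · exfalso
        refine hint j (by omega) (by omega) ⟨a', ?_⟩
        rw [h1, vx_zero S hab']
      · exact h
    have hk2 : k + 1 ≤ d := by
      rcases Nat.lt_or_ge (k + 1) (d + 1) with h | h
      · omega
      · exfalso
        have hkd : k + 1 = d + 1 := by omega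
        refine hint (j + 1) (by omega) le_rfl ⟨b', ?_⟩
        rw [h2, hkd, vx_last S hlen hab']
    have hvj : v j = vx S a b (q + (j - i)) := hrun j hij le_rfl
    have hmb1 : 1 ≤ q + (j - i) := by omega
    have hmb2 : q + (j - i) ≤ d := by omega
    rcases vx_edge_unique S hlen hab' hab hk1 (by omega) hmb1 hmb2
        (h1.symm.trans hvj) with ⟨e1, e2, e3⟩ | ⟨e1, e2, e3⟩
    · -- aligned: continue ascending
      refine ⟨a, b, hab, q, hq1, by omega, ?_⟩
      intro u hu1 hu2
      rcases Nat.lt_or_ge u (j + 1) with h | h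
      · exact hrun u hu1 (by omega)
      · have hu : u = j + 1 := by omega
        rw [hu, h2, e1, e2]
        congr 1
        omega
    · -- crossed
      rcases Nat.eq_or_lt_of_le hij with hije | hijlt
      · -- j = i : single vertex, re-orient
        refine ⟨a', b', hab', k, hk1, by omega, ?_⟩
        intro u hu1 hu2
        rcases Nat.lt_or_ge u (j + 1) with h | h
        · have hu : u = i := by omega
          rw [hu, hije, h1]
          congr 1
          omega
        · have hu : u = j + 1 := by omega
          rw [hu, h2]
          congr 1
          omega
      · -- j > i : direction flip contradicts injectivity of the path
        exfalso
        have hprev : v (j - 1) = vx S a b (q + (j - 1 - i)) :=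
          hrun (j - 1) (by omega) (by omega)
        have hnext : v (j + 1) = vx S a b (q + (j - 1 - i)) := by
          rw [h2, e1, e2]
          rw [vx_flip S hlen hab.symm (show k + 1 ≤ d + 1 by omega)]
          congr 1
          omega
        exact hdist (j - 1) (by omega) (j + 1) (by omega) (by omega)
          (hprev.trans hnext.symm)

/-- a full traversal between two consecutive branch vertices -/
lemma full_lemma (hd : 2 ≤ d) (i j : ℕ) (hij : i < j) (hjN : j < N)
    (hbi : ∃ x, v i = S.emb x) (hbj : ∃ y, v j = S.emb y)
    (hint : ∀ t, i < t → t < j → ¬ ∃ x, v t = S.emb x) :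
    ∃ (a b : Fin n) (_ : a ≠ b), v i = S.emb a ∧ v j = S.emb b ∧ j = i + d + 1 ∧
      ∀ t, i < t → t < j → v t = vx S a b (t - i) := by
  obtain ⟨x, hx⟩ := hbi
  obtain ⟨y, hy⟩ := hbj
  have hij2 : i + 2 ≤ j := by
    by_contra hcon
    have hji : j = i + 1 := by omega
    obtain ⟨a', b', hab', k, hk, h1, h2⟩ := adj_class S hlen (hadj i (by omega))
    rcases emb_eq_vx S hlen hab' (show k ≤ d + 1 by omega) (h1.symm.trans hx) with
      ⟨hk0, _⟩ | ⟨hkd, _⟩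
    · have hy' : v (i + 1) = S.emb y := by rw [← hji, hy]
      rcases emb_eq_vx S hlen hab' (show k + 1 ≤ d + 1 by omega)
          (h2.symm.trans hy') with ⟨hc, _⟩ | ⟨hc, _⟩ <;> omega
    · omega
  obtain ⟨a, b, hab, q, hq1, hq2, hrun⟩ := run_lemma S hlen v N hadj hdist (i + 1) (j - 1)
    (by omega) (by omega) (fun t h1 h2 => hint t (by omega) (by omega))
  obtain ⟨a', b', hab', k, hk, h1, h2⟩ := adj_class S hlen (hadj i (by omega))
  rcases emb_eq_vx S hlen hab' (show k ≤ d + 1 by omega) (h1.symm.trans hx) with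
    ⟨hk0, hxa⟩ | ⟨hkd, _⟩
  · -- v i = emb a', v (i+1) = vx a' b' 1
    have hv1 : v (i + 1) = vx S a' b' 1 := by rw [h2, hk0]
    have hv1' : v (i + 1) = vx S a b q := by
      have := hrun (i + 1) le_rfl (by omega)
      simpa using this
    rcases vx_edge_unique S hlen hab' hab (by omega) (by omega) hq1 (by omega)
        (hv1.symm.trans hv1') with ⟨e1, e2, e3⟩ | ⟨e1, e2, e3⟩
    · -- aligned, q = 1
      obtain ⟨c1, c2, hc12, kt, hkt, g1, g2⟩ := adj_class S hlen (hadj (j - 1) (by omega))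
      have hj1 : j - 1 + 1 = j := by omega
      rw [hj1] at g2
      rcases emb_eq_vx S hlen hc12 (show kt + 1 ≤ d + 1 by omega)
          (g2.symm.trans hy) with ⟨hc, _⟩ | ⟨hc, hybt⟩
      · omega
      · have hktd : kt = d := by omega
        have hvj1 : v (j - 1) = vx S a b (q + (j - 1 - (i + 1))) :=
          hrun (j - 1) (by omega) le_rfl
        have hvj1' : v (j - 1) = vx S c1 c2 d := by rw [g1, hktd]
        rcases vx_edge_unique S hlen hc12 hab (by omega) (by omega) (by omega) (by omega)
            (hvj1'.symm.trans hvj1) with ⟨f1, f2, f3⟩ | ⟨f1, f2, f3⟩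
        · -- aligned full traversal
          refine ⟨a', b', hab', by rw [hx, hxa], ?_, by omega, ?_⟩
          · rw [hy, hybt, f2, ← e2]
          · intro t ht1 ht2
            have := hrun t (by omega) (by omega)
            rw [this, ← e1, ← e2]
            congr 1
            omega
        · -- crossed: j = i + 2 and v i = v j
          exfalso
          have : v i = v j := by
            rw [hy, hybt, f2, ← e1, ← hxa, ← hx]
          exact hdist i (by omega) j (by omega) (by omega) this
    · -- crossed at the left end: q = d, forces j = i + 2
      exfalso
      have hji2 : j = i + 2 := by omega
      obtain ⟨c1, c2, hc12, kt, hkt, g1, g2⟩ := adj_class S hlen (hadj (i + 1) (by omega))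
      have hy2 : v (i + 1 + 1) = S.emb y := by
        rw [show i + 1 + 1 = j by omega, hy]
      rcases emb_eq_vx S hlen hc12 (show kt + 1 ≤ d + 1 by omega)
          (g2.symm.trans hy2) with ⟨hc, _⟩ | ⟨hc, hybt⟩
      · omega
      · have hktd : kt = d := by omega
        have hvi1 : v (i + 1) = vx S c1 c2 d := by rw [g1, hktd]
        rcases vx_edge_unique S hlen hc12 hab' (by omega) (by omega) (by omega) (by omega)
            (hvi1.symm.trans hv1) with ⟨f1, f2, f3⟩ | ⟨f1, f2, f3⟩
        · omega
        · have : v i = v j := by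
            rw [hy, hybt, f2, ← hxa, ← hx]
          exact hdist i (by omega) j (by omega) (by omega) this
  · omega

/-- a run at the start of the path, ending at a branch vertex -/
lemma runL (hd : 2 ≤ d) (i : ℕ) (hi1 : 1 ≤ i) (hiN : i < N)
    (hint : ∀ t, t < i → ¬ ∃ x, v t = S.emb x) (hbi : ∃ x, v i = S.emb x) :
    ∃ (a b : Fin n) (_ : a ≠ b), v i = S.emb b ∧ i ≤ d ∧
      ∀ t, t < i → v t = vx S a b (d + 1 - i + t) := by
  obtain ⟨x, hx⟩ := hbi
  obtain ⟨a, b, hab, q, hq1, hq2, hrun⟩ := run_lemma S hlen v N hadj hdist 0 (i - 1)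
    (by omega) (by omega) (fun t h1 h2 => hint t (by omega))
  obtain ⟨c1, c2, hc12, kt, hkt, g1, g2⟩ := adj_class S hlen (hadj (i - 1) (by omega))
  have hg2 : v i = vx S c1 c2 (kt + 1) := by
    rw [show i = i - 1 + 1 by omega]
    exact g2
  rcases emb_eq_vx S hlen hc12 (show kt + 1 ≤ d + 1 by omega) (hg2.symm.trans hx)
    with ⟨hc, _⟩ | ⟨hc, hyb⟩
  · omega
  · have hktd : kt = d := by omega
    have hvi1 : v (i - 1) = vx S c1 c2 d := by rw [g1, hktd]
    have hvi1' : v (i - 1) = vx S a b (q + (i - 1)) := by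
      have := hrun (i - 1) (by omega) le_rfl
      simpa using this
    rcases vx_edge_unique S hlen hc12 hab (by omega) (by omega) (by omega) (by omega)
        (hvi1.symm.trans hvi1') with ⟨f1, f2, f3⟩ | ⟨f1, f2, f3⟩
    · refine ⟨a, b, hab, ?_, by omega, ?_⟩
      · rw [hx, hyb, f2]
      · intro t ht
        have := hrun t (by omega) (by omega)
        rw [this]
        congr 1
        omega
    · have hqi : q = 1 ∧ i = 1 := by omega
      refine ⟨c1, c2, hc12, by rw [hx, hyb], by omega, ?_⟩
      intro t ht
      have ht0 : t = 0 := by omega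
      have h0 := hrun 0 (by omega) (by omega)
      rw [ht0, h0, show q + (0 - 0) = 1 by omega, show d + 1 - i + 0 = d by omega,
        f1, f2]
      rw [vx_flip S hlen hab (show (1:ℕ) ≤ d + 1 by omega)]
      congr 1

/-- a run at the end of the path, starting at a branch vertex -/
lemma runR (hd : 2 ≤ d) (i M : ℕ) (hiM : i < M) (hMN : M < N)
    (hint : ∀ t, i < t → t ≤ M → ¬ ∃ x, v t = S.emb x) (hbi : ∃ x, v i = S.emb x) :
    ∃ (a b : Fin n) (_ : a ≠ b), v i = S.emb a ∧ M - i ≤ d ∧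
      ∀ t, i < t → t ≤ M → v t = vx S a b (t - i) := by
  obtain ⟨x, hx⟩ := hbi
  obtain ⟨a, b, hab, q, hq1, hq2, hrun⟩ := run_lemma S hlen v N hadj hdist (i + 1) M
    (by omega) (by omega) (fun t h1 h2 => hint t (by omega) h2)
  obtain ⟨c1, c2, hc12, kt, hkt, g1, g2⟩ := adj_class S hlen (hadj i (by omega))
  rcases emb_eq_vx S hlen hc12 (show kt ≤ d + 1 by omega) (g1.symm.trans hx)
    with ⟨hc, hxc⟩ | ⟨hc, _⟩
  · have hv1 : v (i + 1) = vx S c1 c2 1 := by rw [g2, hc]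
    have hv1' : v (i + 1) = vx S a b q := by
      have := hrun (i + 1) le_rfl (by omega)
      simpa using this
    rcases vx_edge_unique S hlen hc12 hab (by omega) (by omega) (by omega) (by omega)
        (hv1.symm.trans hv1') with ⟨f1, f2, f3⟩ | ⟨f1, f2, f3⟩
    · refine ⟨a, b, hab, ?_, by omega, ?_⟩
      · rw [hx, hxc, f1]
      · intro t ht1 ht2
        have := hrun t (by omega) ht2
        rw [this]
        congr 1
        omega
    · have hMi : M = i + 1 := by omega
      refine ⟨c1, c2, hc12, by rw [hx, hxc], by omega, ?_⟩
      intro t ht1 ht2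
      have ht : t = i + 1 := by omega
      rw [ht, hv1]
      congr 1
      omega
  · omega

end Runs

end Stmt19Aux

namespace Stmt19Aux

section MainLemma

open scoped Classical

variable {W : Type*} {H : SimpleGraph W} {n d A B : ℕ}
variable (S : SubdivisionWitness (completeGraph (Fin n)) H)
variable (co : Fin n ↪ Fin A × (Fin d → Fin B))
variable (hlen : ∀ ⦃a b : Fin n⦄ (h : (completeGraph (Fin n)).Adj a b),
  (S.path h).length = d + 1)

include hlen

lemma main_nonrep (hd : 2 ≤ d) (hA : 1 ≤ A) (hB : 1 ≤ B) :
    NonRepColoring H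
      (fun w => (⟨colN S co w, colN_lt S co hlen hA hB w⟩ : Fin (A + 8 * B))) := by
  intro s hs v hdist hadj hrep
  have hrepN : ∀ i, i < s → colN S co (v i) = colN S co (v (i + s)) := by
    intro i hi
    exact congrArg Fin.val (hrep i hi)
  have typ : ∀ i, i < s → ((∃ x, v i = S.emb x) ↔ (∃ x, v (i + s) = S.emb x)) := by
    intro i hi
    rw [← colN_lt_iff S co hlen (v i), ← colN_lt_iff S co hlen (v (i + s)), hrepN i hi]
  set Bs : Finset ℕ := (Finset.range s).filter (fun i => ∃ x, v i = S.emb x) with hBsdef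
  have memBs : ∀ t, t ∈ Bs ↔ (t < s ∧ ∃ x, v t = S.emb x) := by
    intro t
    rw [hBsdef, Finset.mem_filter, Finset.mem_range]
  have brLow : ∀ t, t < s → ((∃ x, v t = S.emb x) ↔ t ∈ Bs) := by
    intro t ht
    rw [memBs t]
    exact ⟨fun h => ⟨ht, h⟩, fun h => h.2⟩
  have brHigh : ∀ t, s ≤ t → t < 2 * s → ((∃ x, v t = S.emb x) ↔ (t - s) ∈ Bs) := by
    intro t h1 h2
    have ht := typ (t - s) (by omega)
    rw [show (t - s) + s = t by omega] at ht
    rw [← ht]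
    exact brLow (t - s) (by omega)
  rcases Finset.eq_empty_or_nonempty Bs with hempty | hne
  · -- Case A: no branch vertices at all
    have hint : ∀ t, 0 ≤ t → t ≤ 2 * s - 1 → ¬ ∃ x, v t = S.emb x := by
      intro t _ ht2
      rcases Nat.lt_or_ge t s with h | h
      · rw [brLow t h, hempty]
        exact Finset.notMem_empty t
      · rw [brHigh t h (by omega), hempty]
        exact Finset.notMem_empty _
    obtain ⟨a, b, hab, q, hq1, hq2, hrun⟩ := run_lemma S hlen v (2 * s) hadj hdist 0
      (2 * s - 1) (by omega) (by omega) hint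
    refine nosq_oriented co hab hq1 hs (by omega) ?_
    intro t ht
    have h1 := hrepN t ht
    have e1 : v t = vx S a b (q + t) := by
      have := hrun t (by omega) (by omega)
      exact this
    have e2 : v (t + s) = vx S a b (q + s + t) := by
      have := hrun (t + s) (by omega) (by omega)
      rw [this]; congr 1; omega
    rw [e1, e2, colN_vxO S co hlen hab (by omega) (by omega),
      colN_vxO S co hlen hab (by omega) (by omega)] at h1
    have p1 := PH_le co a b (q + t)
    have p2 := PH_le co a b (q + s + t)
    omega
  · set i := Bs.min' hne with hidef
    have hiBs : i ∈ Bs := Bs.min'_mem hne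
    have his : i < s := ((memBs i).mp hiBs).1
    have hbr_i : ∃ x, v i = S.emb x := ((memBs i).mp hiBs).2
    have himin : ∀ t ∈ Bs, i ≤ t := fun t ht => Bs.min'_le t ht
    by_cases hcard : Bs.card ≤ 1
    · -- Case B: exactly one branch vertex per half
      have hBsi : ∀ t ∈ Bs, t = i :=
        fun t ht => Finset.card_le_one.mp hcard t ht i hiBs
      have hbr_is : ∃ x, v (i + s) = S.emb x := (typ i his).mp hbr_i
      have hintm : ∀ t, i < t → t < i + s → ¬ ∃ x, v t = S.emb x := by
        intro t h1 h2 hB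
        rcases Nat.lt_or_ge t s with h | h
        · have := hBsi t ((memBs t).mpr ⟨h, hB⟩)
          omega
        · have := hBsi (t - s) ((brHigh t h (by omega)).mp hB)
          omega
      obtain ⟨x, x', hxx', hvx, hvx', hsid, hmid⟩ := full_lemma S hlen v (2 * s) hadj hdist
        hd i (i + s) (by omega) (by omega) hbr_i hbr_is hintm
      have hsd : s = d + 1 := by omega
      have hxne : x ≠ x' := by
        intro h
        exact hdist i (by omega) (i + s) (by omega) (by omega) (by rw [hvx, hvx', h])
      have halxx : al co x = al co x' := by
        have := hrepN i his
        rw [hvx, hvx', colN_emb, colN_emb] at this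
        exact this
      obtain ⟨hp21, hp2ne⟩ := tdf_spec co (exists_be_diff co hxne halxx)
      have hp2d : tdf co x x' ≤ d := tdf_le co x x'
      set p2 := tdf co x x' with hp2def
      have hmid' : ∀ t, 1 ≤ t → t ≤ d → v (i + t) = vx S x x' t := by
        intro t h1 h2
        have := hmid (i + t) (by omega) (by omega)
        rw [this]; congr 1; omega
      have hintL : ∀ t, t < i → ¬ ∃ x, v t = S.emb x := by
        intro t ht hB
        have := hBsi t ((memBs t).mpr ⟨by omega, hB⟩)
        omega
      have hintR : ∀ t, i + s < t → t ≤ 2 * s - 1 → ¬ ∃ x, v t = S.emb x := by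
        intro t h1 h2 hB
        have := hBsi (t - s) ((brHigh t (by omega) (by omega)).mp hB)
        omega
      rcases lt_or_gt_of_ne hxx' with hxl | hxl
      · -- x < x' : ascending traversal
        rcases Nat.lt_or_ge (d - i) p2 with hcase | hcase
        · -- suffix window
          have hi1 : 1 ≤ i := by omega
          obtain ⟨a1, b1, ha1b1, hvb1, hid, hrunL⟩ := runL S hlen v (2 * s) hadj hdist hd
            i hi1 (by omega) hintL hbr_i
          have hb1x : b1 = x := S.emb.injective (hvb1.symm.trans hvx)
          have hL : v (p2 + i - (d + 1)) = vx S a1 b1 p2 := by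
            have := hrunL (p2 + i - (d + 1)) (by omega)
            rw [this]; congr 1; omega
          have hR : v (p2 + i - (d + 1) + s) = vx S x x' p2 := by
            rw [show p2 + i - (d + 1) + s = i + p2 by omega]
            exact hmid' p2 (by omega) (by omega)
          have hc := hrepN (p2 + i - (d + 1)) (by omega)
          rw [hL, hR, colN_vxO S co hlen ha1b1 (by omega) (by omega),
            colN_vxO S co hlen hxx' (by omega) (by omega)] at hc
          have q1 := PH_le co a1 b1 p2
          have q2 := PH_le co x x' p2
          rcases lt_or_gt_of_ne ha1b1 with hor | hor
          · -- direct digit contradiction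
            have hDGe : DG co a1 b1 p2 = DG co x x' p2 := by omega
            unfold DG at hDGe
            rw [if_pos hor, if_pos hxl, hb1x] at hDGe
            exact hp2ne hDGe
          · -- kill at position d
            have hLd : v (i - 1) = vx S a1 b1 d := by
              have := hrunL (i - 1) (by omega)
              rw [this]; congr 1; omega
            have hRd : v (i - 1 + s) = vx S x x' d := by
              rw [show i - 1 + s = i + d by omega]
              exact hmid' d (by omega) (by omega)
            have hcd := hrepN (i - 1) (by omega)
            rw [hLd, hRd, colN_vxO S co hlen ha1b1 (by omega) (by omega),
              colN_vxO S co hlen hxx' (by omega) (by omega)] at hcd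
            have q1' := PH_le co a1 b1 d
            have q2' := PH_le co x x' d
            have hPHe : PH co a1 b1 d = PH co x x' d := by omega
            unfold PH at hPHe
            rw [if_neg (asymm hor), if_pos hxl] at hPHe
            have l1 : 6 ≤ ph co b1 a1 (d + 1 - d) := by
              rw [show d + 1 - d = 1 by omega]
              exact ph_one_ge co b1 a1
            have l2 := ph_ne_one_le co x x' (show d ≠ 1 by omega)
            omega
        · -- prefix window
          obtain ⟨a3, b3, ha3b3, hva3, hMd, hrunR⟩ := runR S hlen v (2 * s) hadj hdist hd
            (i + s) (2 * s - 1) (by omega) (by omega) hintR hbr_is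
          have ha3x : a3 = x' := S.emb.injective (hva3.symm.trans hvx')
          have hLp : v (i + p2) = vx S x x' p2 := hmid' p2 (by omega) (by omega)
          have hRp : v (i + p2 + s) = vx S a3 b3 p2 := by
            have := hrunR (i + p2 + s) (by omega) (by omega)
            rw [this]; congr 1; omega
          have hc := hrepN (i + p2) (by omega)
          rw [hLp, hRp, colN_vxO S co hlen hxx' (by omega) (by omega),
            colN_vxO S co hlen ha3b3 (by omega) (by omega)] at hc
          have q1 := PH_le co x x' p2
          have q2 := PH_le co a3 b3 p2
          rcases lt_or_gt_of_ne ha3b3 with hor | hor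
          · -- alive orientation: mark/digit contradiction
            have hDGe : DG co x x' p2 = DG co a3 b3 p2 := by omega
            have hPHe : PH co x x' p2 = PH co a3 b3 p2 := by omega
            unfold DG at hDGe
            rw [if_pos hxl, if_pos hor] at hDGe
            unfold PH at hPHe
            rw [if_pos hxl, if_pos hor] at hPHe
            rcases Nat.eq_or_lt_of_le hp21 with hp2one | hp2two
            · have hPH1 := hPHe
              rw [← hp2one] at hPH1
              have htd3 : tdf co a3 b3 = 1 := (ph_one_eq co x x' a3 b3 hPH1).mp (by omega)
              have hsp := tdf_pos_spec co (x := a3) (y := b3) (by omega)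
              rw [htd3, ha3x] at hsp
              have hDGe1 := hDGe
              rw [← hp2one] at hDGe1
              exact hsp hDGe1
            · have hm1 : ph co x x' p2 = 5 := (ph_mark_iff co x x' (by omega)).mpr hp2def
              have hm2 : ph co a3 b3 p2 = 5 := by rw [← hPHe]; exact hm1
              have htd3 : p2 = tdf co a3 b3 := (ph_mark_iff co a3 b3 (by omega)).mp hm2
              have hsp := tdf_pos_spec co (x := a3) (y := b3) (by omega)
              rw [← htd3, ha3x] at hsp
              exact hsp hDGe
          · -- kill at position 1
            have hL1 : v (i + 1) = vx S x x' 1 := hmid' 1 (by omega) (by omega)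
            have hR1 : v (i + 1 + s) = vx S a3 b3 1 := by
              have := hrunR (i + 1 + s) (by omega) (by omega)
              rw [this]; congr 1; omega
            have hc1 := hrepN (i + 1) (by omega)
            rw [hL1, hR1, colN_vxO S co hlen hxx' (by omega) (by omega),
              colN_vxO S co hlen ha3b3 (by omega) (by omega)] at hc1
            have q1' := PH_le co x x' 1
            have q2' := PH_le co a3 b3 1
            have hPHe : PH co x x' 1 = PH co a3 b3 1 := by omega
            unfold PH at hPHe
            rw [if_pos hxl, if_neg (asymm hor)] at hPHe
            have l1 := ph_one_ge co x x'
            have l2 : ph co b3 a3 (d + 1 - 1) ≤ 5 := by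
              exact ph_ne_one_le co b3 a3 (by omega)
            omega
      · -- x' < x : descending traversal
        rcases Nat.lt_or_ge i p2 with hcase | hcase
        · -- high window
          obtain ⟨a3, b3, ha3b3, hva3, hMd, hrunR⟩ := runR S hlen v (2 * s) hadj hdist hd
            (i + s) (2 * s - 1) (by omega) (by omega) hintR hbr_is
          have ha3x : a3 = x' := S.emb.injective (hva3.symm.trans hvx')
          have hL : v (i + (d + 1 - p2)) = vx S x x' (d + 1 - p2) :=
            hmid' (d + 1 - p2) (by omega) (by omega)
          have hR : v (i + (d + 1 - p2) + s) = vx S a3 b3 (d + 1 - p2) := by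
            have := hrunR (i + (d + 1 - p2) + s) (by omega) (by omega)
            rw [this]; congr 1; omega
          have hc := hrepN (i + (d + 1 - p2)) (by omega)
          rw [hL, hR, colN_vxO S co hlen hxx' (by omega) (by omega),
            colN_vxO S co hlen ha3b3 (by omega) (by omega)] at hc
          have q1 := PH_le co x x' (d + 1 - p2)
          have q2 := PH_le co a3 b3 (d + 1 - p2)
          rcases lt_or_gt_of_ne ha3b3 with hor | hor
          · -- kill at position 1
            have hL1 : v (i + 1) = vx S x x' 1 := hmid' 1 (by omega) (by omega)
            have hR1 : v (i + 1 + s) = vx S a3 b3 1 := by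
              have := hrunR (i + 1 + s) (by omega) (by omega)
              rw [this]; congr 1; omega
            have hc1 := hrepN (i + 1) (by omega)
            rw [hL1, hR1, colN_vxO S co hlen hxx' (by omega) (by omega),
              colN_vxO S co hlen ha3b3 (by omega) (by omega)] at hc1
            have q1' := PH_le co x x' 1
            have q2' := PH_le co a3 b3 1
            have hPHe : PH co x x' 1 = PH co a3 b3 1 := by omega
            unfold PH at hPHe
            rw [if_neg (asymm hxl), if_pos hor] at hPHe
            have l1 := ph_ne_one_le co x' x (show d + 1 - 1 ≠ 1 by omega)
            have l2 := ph_one_ge co a3 b3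
            omega
          · -- digits
            have hDGe : DG co x x' (d + 1 - p2) = DG co a3 b3 (d + 1 - p2) := by omega
            unfold DG at hDGe
            rw [if_neg (asymm hxl), if_neg (asymm hor)] at hDGe
            rw [show d + 1 - (d + 1 - p2) - 1 = p2 - 1 by omega, ha3x] at hDGe
            exact hp2ne hDGe
        · -- low window
          have hi1 : 1 ≤ i := by omega
          obtain ⟨a1, b1, ha1b1, hvb1, hid, hrunL⟩ := runL S hlen v (2 * s) hadj hdist hd
            i hi1 (by omega) hintL hbr_i
          have hb1x : b1 = x := S.emb.injective (hvb1.symm.trans hvx)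
          have hL : v (i - p2) = vx S a1 b1 (d + 1 - p2) := by
            have := hrunL (i - p2) (by omega)
            rw [this]; congr 1; omega
          have hR : v (i - p2 + s) = vx S x x' (d + 1 - p2) := by
            rw [show i - p2 + s = i + (d + 1 - p2) by omega]
            exact hmid' (d + 1 - p2) (by omega) (by omega)
          have hc := hrepN (i - p2) (by omega)
          rw [hL, hR, colN_vxO S co hlen ha1b1 (by omega) (by omega),
            colN_vxO S co hlen hxx' (by omega) (by omega)] at hc
          have q1 := PH_le co a1 b1 (d + 1 - p2)
          have q2 := PH_le co x x' (d + 1 - p2)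
          rcases lt_or_gt_of_ne ha1b1 with hor | hor
          · -- kill at position d
            have hLd : v (i - 1) = vx S a1 b1 d := by
              have := hrunL (i - 1) (by omega)
              rw [this]; congr 1; omega
            have hRd : v (i - 1 + s) = vx S x x' d := by
              rw [show i - 1 + s = i + d by omega]
              exact hmid' d (by omega) (by omega)
            have hcd := hrepN (i - 1) (by omega)
            rw [hLd, hRd, colN_vxO S co hlen ha1b1 (by omega) (by omega),
              colN_vxO S co hlen hxx' (by omega) (by omega)] at hcd
            have q1' := PH_le co a1 b1 d
            have q2' := PH_le co x x' d
            have hPHe : PH co a1 b1 d = PH co x x' d := by omega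
            unfold PH at hPHe
            rw [if_pos hor, if_neg (asymm hxl)] at hPHe
            have l1 := ph_ne_one_le co a1 b1 (show d ≠ 1 by omega)
            have l2 : 6 ≤ ph co x' x (d + 1 - d) := by
              rw [show d + 1 - d = 1 by omega]
              exact ph_one_ge co x' x
            omega
          · -- digits + mark
            have hDGe : DG co a1 b1 (d + 1 - p2) = DG co x x' (d + 1 - p2) := by omega
            have hPHe : PH co a1 b1 (d + 1 - p2) = PH co x x' (d + 1 - p2) := by omega
            unfold DG at hDGe
            rw [if_neg (asymm hor), if_neg (asymm hxl)] at hDGe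
            rw [show d + 1 - (d + 1 - p2) - 1 = p2 - 1 by omega] at hDGe
            unfold PH at hPHe
            rw [if_neg (asymm hor), if_neg (asymm hxl)] at hPHe
            rw [show d + 1 - (d + 1 - p2) = p2 by omega] at hPHe
            rw [hb1x] at hPHe
            rcases Nat.eq_or_lt_of_le hp21 with hp2one | hp2two
            · have hPH1 := hPHe
              rw [← hp2one] at hPH1
              have htda : tdf co x a1 = 1 := (ph_one_eq co x a1 x' x hPH1).mpr
                (by rw [tdf_symm co x' x]; omega)
              have hsp := tdf_pos_spec co (x := x) (y := a1) (by omega)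
              rw [htda] at hsp
              have hDGe1 := hDGe
              rw [← hp2one] at hDGe1
              exact hsp hDGe1.symm
            · have hm2 : ph co x' x p2 = 5 := (ph_mark_iff co x' x (by omega)).mpr
                (hp2def.trans (tdf_symm co x x'))
              have hm1 : ph co x a1 p2 = 5 := by rw [hPHe]; exact hm2
              have htda : p2 = tdf co x a1 := (ph_mark_iff co x a1 (by omega)).mp hm1
              have hsp := tdf_pos_spec co (x := x) (y := a1) (by omega)
              rw [← htda] at hsp
              exact hsp hDGe.symm
    · -- Case C: at least two branch vertices per half
      push_neg at hcard
      have hne2 : (Bs.erase i).Nonempty := by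
        rw [← Finset.card_pos, Finset.card_erase_of_mem hiBs]
        omega
      set j := (Bs.erase i).min' hne2 with hjdef
      have hjmem : j ∈ Bs.erase i := Finset.min'_mem _ hne2
      have hjBs : j ∈ Bs := Finset.mem_of_mem_erase hjmem
      have hjne : j ≠ i := Finset.ne_of_mem_erase hjmem
      have hij : i < j := lt_of_le_of_ne (himin j hjBs) (Ne.symm hjne)
      have hjs : j < s := ((memBs j).mp hjBs).1
      have hintm : ∀ t, i < t → t < j → ¬ ∃ x, v t = S.emb x := by
        intro t h1 h2 hB
        have htBs : t ∈ Bs := (memBs t).mpr ⟨by omega, hB⟩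
        have := Finset.min'_le _ t (Finset.mem_erase.mpr ⟨show t ≠ i by omega, htBs⟩)
        omega
      obtain ⟨xa, xb, hxab, hvxa, hvxb, hjid, hmidL⟩ := full_lemma S hlen v (2 * s) hadj
        hdist hd i j hij (by omega) ((memBs i).mp hiBs).2 ((memBs j).mp hjBs).2 hintm
      have hint2 : ∀ t, i + s < t → t < j + s → ¬ ∃ x, v t = S.emb x := by
        intro t h1 h2 hB
        exact hintm (t - s) (by omega) (by omega) ((brHigh t (by omega) (by omega)).mp hB
          |> fun hmem => ((memBs _).mp hmem).2)
      obtain ⟨ya, yb, hyab, hvya, hvyb, hjid2, hmidR⟩ := full_lemma S hlen v (2 * s) hadj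
        hdist hd (i + s) (j + s) (by omega) (by omega) ((typ i his).mp ((memBs i).mp hiBs).2)
        ((typ j hjs).mp ((memBs j).mp hjBs).2) hint2
      have hal_a : al co xa = al co ya := by
        have := hrepN i his
        rw [hvxa, hvya, colN_emb, colN_emb] at this
        exact this
      have hal_b : al co xb = al co yb := by
        have := hrepN j hjs
        rw [hvxb, hvyb, colN_emb, colN_emb] at this
        exact this
      have hDP : ∀ t, 1 ≤ t → t ≤ d →
          DG co xa xb t = DG co ya yb t ∧ PH co xa xb t = PH co ya yb t := by
        intro t h1 h2
        have hc := hrepN (i + t) (by omega)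
        have eL : v (i + t) = vx S xa xb t := by
          have := hmidL (i + t) (by omega) (by omega)
          rw [this]; congr 1; omega
        have eR : v (i + t + s) = vx S ya yb t := by
          have := hmidR (i + t + s) (by omega) (by omega)
          rw [this]; congr 1; omega
        rw [eL, eR, colN_vxO S co hlen hxab h1 h2, colN_vxO S co hlen hyab h1 h2] at hc
        have := PH_le co xa xb t
        have := PH_le co ya yb t
        constructor <;> omega
      rcases lt_or_gt_of_ne hxab with hx1 | hx1 <;> rcases lt_or_gt_of_ne hyab with hy1 | hy1
      · -- asc/asc : xb = yb
        have hbb : xb = yb := by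
          apply code_eq co hal_b
          intro k hk
          have := (hDP (k + 1) (by omega) (by omega)).1
          unfold DG at this
          rw [if_pos hx1, if_pos hy1] at this
          simpa using this
        exact hdist j (by omega) (j + s) (by omega) (by omega)
          (by rw [hvxb, hvyb, hbb])
      · -- asc/desc : phase clash at position 1
        have := (hDP 1 (by omega) (by omega)).2
        unfold PH at this
        rw [if_pos hx1, if_neg (asymm hy1)] at this
        have l1 := ph_one_ge co xa xb
        have l2 := ph_ne_one_le co yb ya (show d + 1 - 1 ≠ 1 by omega)
        omega
      · -- desc/asc : phase clash at position 1
        have := (hDP 1 (by omega) (by omega)).2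
        unfold PH at this
        rw [if_neg (asymm hx1), if_pos hy1] at this
        have l1 := ph_ne_one_le co xb xa (show d + 1 - 1 ≠ 1 by omega)
        have l2 := ph_one_ge co ya yb
        omega
      · -- desc/desc : xa = ya
        have haa : xa = ya := by
          apply code_eq co hal_a
          intro k hk
          have := (hDP (d - k) (by omega) (by omega)).1
          unfold DG at this
          rw [if_neg (asymm hx1), if_neg (asymm hy1)] at this
          rw [show d + 1 - (d - k) - 1 = k by omega] at this
          exact this
        exact hdist i (by omega) (i + s) (by omega) (by omega)
          (by rw [hvxa, hvya, haa])

end MainLemma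

end Stmt19Aux


/-- For all integers `A ≥ 1`, `B ≥ 2`, `d ≥ 2` and every `n ≥ 1` with
`n ≤ A·B^d`, the `d`-subdivision `K_{n,d}` of `K_n` satisfies `π(K_{n,d}) ≤ A + 8B`. -/
theorem stmt_19 {W : Type*} [Fintype W] (A B d n : ℕ)
    (hA : 1 ≤ A) (hB : 2 ≤ B) (hd : 2 ≤ d) (hn : 1 ≤ n) (hle : n ≤ A * B ^ d)
    (H : SimpleGraph W) (hsub : IsExactSubdivision d (completeGraph (Fin n)) H) :
    piNum H ≤ A + 8 * B := by
  obtain ⟨S, hlen⟩ := hsub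
  have hcard : Fintype.card (Fin n) ≤ Fintype.card (Fin A × (Fin d → Fin B)) := by
    rw [Fintype.card_prod, Fintype.card_fun]
    simpa using hle
  obtain ⟨co⟩ := Function.Embedding.nonempty_of_card_le hcard
  have hnon := Stmt19Aux.main_nonrep S co hlen hd hA (by omega : 1 ≤ B)
  exact Nat.sInf_le ⟨_, hnon⟩
end
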